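/- arXiv:2012.14992 — 6 statements merged into one kernel-verified Lean document; each statement's English description precedes it below -/
import Mathlib

section
/- Let r ≥ 2, let F_1, …, F_n be matchings of size n in an r-uniform hypergraph, and let q be the maximum size of a rainbow matching. Then (2n − q(2r−1))(n − q) ≤ rq. -/
/-- Let `r ≥ 2`, let `F₁, …, Fₙ` be matchings of size `n` in an
`r`-uniform hypergraph, and let `q` be the maximum size of a rainbow matching (realized
by indices `I` and choice `c`, so `q = |I|`). Then `(2n - q(2r-1))(n - q) ≤ rq`. -/
theorem stmt_9 {V : Type*} [DecidableEq V] (r n : ℕ) (hr : 2 ≤ r)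
    (E : Set (Finset V)) (hunifE : ∀ e ∈ E, e.card = r)
    (F : Fin n → Finset (Finset V))
    (hedges : ∀ i, ∀ e ∈ F i, e ∈ E)
    (hmatch : ∀ i, ∀ e ∈ F i, ∀ f ∈ F i, e ≠ f → Disjoint e f)
    (hsize : ∀ i, (F i).card = n)
    (I : Finset (Fin n)) (c : Fin n → Finset V)
    (hc : ∀ i ∈ I, c i ∈ F i)
    (hdisj : ∀ i ∈ I, ∀ j ∈ I, i ≠ j → Disjoint (c i) (c j))
    (hmax : ∀ (J : Finset (Fin n)) (d : Fin n → Finset V),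
      (∀ i ∈ J, d i ∈ F i) →
      (∀ i ∈ J, ∀ j ∈ J, i ≠ j → Disjoint (d i) (d j)) →
      J.card ≤ I.card) :
    (2 * (n : ℝ) - (I.card : ℝ) * (2 * (r : ℝ) - 1)) * ((n : ℝ) - (I.card : ℝ)) ≤
      (r : ℝ) * (I.card : ℝ) := by
  classical
  rcases Nat.eq_zero_or_pos n with hn0 | hn0
  · subst hn0
    have hI : I = ∅ := Finset.eq_empty_of_forall_notMem fun i _ => absurd i.2 (by omega)
    simp [hI]
  set q := I.card with hq
  have hqn : q ≤ n := by
    have := Finset.card_le_univ I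
    simpa using this
  have hVne : Nonempty V := by
    obtain ⟨e, he⟩ := Finset.card_pos.mp (show 0 < (F ⟨0, hn0⟩).card by rw [hsize]; exact hn0)
    have hecard : e.card = r := hunifE e (hedges _ e he)
    obtain ⟨v, _⟩ := Finset.card_pos.mp (show 0 < e.card by omega)
    exact ⟨v⟩
  set S : Finset V := I.biUnion c with hS
  have hsubS : ∀ k ∈ I, c k ⊆ S := fun k hk => Finset.subset_biUnion_of_mem c hk
  have hcardc : ∀ j ∈ I, (c j).card = r := fun j hj => hunifE _ (hedges j _ (hc j hj))
  have cardS : S.card = r * q := by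
    rw [hS, Finset.card_biUnion hdisj, Finset.sum_congr rfl hcardc, Finset.sum_const,
      smul_eq_mul, mul_comm]
  -- every edge of an unused matching meets S
  have meets : ∀ i ∉ I, ∀ e ∈ F i, (e ∩ S).Nonempty := by
    intro i hi e he
    by_contra hne
    have hdisjeS : Disjoint e S := by
      rw [Finset.disjoint_iff_inter_eq_empty]
      exact Finset.not_nonempty_iff_eq_empty.mp hne
    have hcard := hmax (insert i I) (Function.update c i e) ?_ ?_
    · rw [Finset.card_insert_of_notMem hi] at hcard; omega
    · intro k hk
      rcases Finset.mem_insert.mp hk with hk1 | hk1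
      · subst hk1; simpa using he
      · have hki : k ≠ i := fun h => hi (h ▸ hk1)
        rw [Function.update_of_ne hki]
        exact hc k hk1
    · intro k hk l hl hkl
      rcases Finset.mem_insert.mp hk with hk1 | hk1 <;>
        rcases Finset.mem_insert.mp hl with hl1 | hl1
      · exact absurd (hk1.trans hl1.symm) hkl
      · have hli : l ≠ i := fun h => hi (h ▸ hl1)
        subst hk1
        rw [Function.update_self, Function.update_of_ne hli]
        exact hdisjeS.mono_right (hsubS l hl1)
      · have hki : k ≠ i := fun h => hi (h ▸ hk1)
        subst hl1
        rw [Function.update_self, Function.update_of_ne hki]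
        exact (hdisjeS.mono_right (hsubS k hk1)).symm
      · have hki : k ≠ i := fun h => hi (h ▸ hk1)
        have hli : l ≠ i := fun h => hi (h ▸ hl1)
        rw [Function.update_of_ne hki, Function.update_of_ne hli]
        exact hdisj k hk1 l hl1 hkl
  set sing : Fin n → Finset (Finset V) :=
    fun i => (F i).filter (fun e => (e ∩ S).card = 1) with hsing
  set cls : Fin n → Fin n → Finset (Finset V) :=
    fun i j => (F i).filter (fun e => (e ∩ S).card = 1 ∧ e ∩ S ⊆ c j) with hcls
  -- step A : many singles
  have hA : ∀ i ∉ I, 2 * n ≤ (sing i).card + r * q := by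
    intro i hi
    have hdisjinter : ∀ e ∈ F i, ∀ f ∈ F i, e ≠ f → Disjoint (e ∩ S) (f ∩ S) := by
      intro e he f hf hef
      exact (hmatch i e he f hf hef).mono Finset.inter_subset_left Finset.inter_subset_left
    have hsum_le : ∑ e ∈ F i, (e ∩ S).card ≤ r * q := by
      rw [← Finset.card_biUnion hdisjinter, ← cardS]
      exact Finset.card_le_card (Finset.biUnion_subset.mpr fun e _ => Finset.inter_subset_right)
    have hper : ∀ e ∈ F i, 2 ≤ (e ∩ S).card + (if (e ∩ S).card = 1 then 1 else 0) := by
      intro e he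
      have h1 : 0 < (e ∩ S).card := Finset.card_pos.mpr (meets i hi e he)
      split <;> omega
    have hcalc : 2 * n ≤ ∑ e ∈ F i, (e ∩ S).card + (sing i).card := by
      calc 2 * n = ∑ _e ∈ F i, 2 := by rw [Finset.sum_const, hsize i, smul_eq_mul, mul_comm]
        _ ≤ ∑ e ∈ F i, ((e ∩ S).card + (if (e ∩ S).card = 1 then 1 else 0)) :=
            Finset.sum_le_sum hper
        _ = ∑ e ∈ F i, (e ∩ S).card + (sing i).card := by
            rw [Finset.sum_add_distrib, hsing, Finset.card_filter]
    omega
  -- step B : singles split into classes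
  have hB : ∀ i, (sing i).card ≤ ∑ j ∈ I, (cls i j).card := by
    intro i
    have hsub : sing i ⊆ I.biUnion (fun j => cls i j) := by
      intro e he
      obtain ⟨heF, h1⟩ := Finset.mem_filter.mp he
      obtain ⟨v, hv⟩ := Finset.card_eq_one.mp h1
      have hvS : v ∈ S := (Finset.mem_inter.mp (hv ▸ Finset.mem_singleton_self v)).2
      obtain ⟨j, hj, hvj⟩ := Finset.mem_biUnion.mp hvS
      refine Finset.mem_biUnion.mpr ⟨j, hj, Finset.mem_filter.mpr ⟨heF, h1, ?_⟩⟩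
      rw [hv]
      simpa using hvj
    exact le_trans (Finset.card_le_card hsub) (Finset.card_biUnion_le)
  -- the head function
  set hd : Finset V → V :=
    fun e => if h : (e ∩ S).Nonempty then h.choose else Classical.choice hVne with hhd
  have hd_spec : ∀ e : Finset V, (e ∩ S).card = 1 → e ∩ S = {hd e} := by
    intro e h1
    have hne : (e ∩ S).Nonempty := Finset.card_pos.mp (by omega)
    have hmem : hd e ∈ e ∩ S := by
      rw [hhd]; simp only [dif_pos hne]; exact hne.choose_spec
    obtain ⟨a, ha⟩ := Finset.card_eq_one.mp h1
    rw [ha] at hmem ⊢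
    rw [Finset.mem_singleton.mp hmem]
  have hd_mem : ∀ e : Finset V, (e ∩ S).card = 1 → hd e ∈ e ∩ S := by
    intro e h1
    rw [hd_spec e h1]
    exact Finset.mem_singleton_self _
  -- injectivity of heads within one class
  have hd_inj : ∀ i, ∀ e ∈ sing i, ∀ f ∈ sing i, hd e = hd f → e = f := by
    intro i e he f hf heq
    obtain ⟨heF, h1e⟩ := Finset.mem_filter.mp he
    obtain ⟨hfF, h1f⟩ := Finset.mem_filter.mp hf
    by_contra hne
    have hde : hd e ∈ e := (Finset.mem_inter.mp (hd_mem e h1e)).1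
    have hdf : hd f ∈ f := (Finset.mem_inter.mp (hd_mem f h1f)).1
    rw [← heq] at hdf
    exact Finset.disjoint_left.mp (hmatch i e heF f hfF hne) hde hdf
  have cls_sub_sing : ∀ i j, cls i j ⊆ sing i := by
    intro i j e he
    obtain ⟨heF, h1, _⟩ := Finset.mem_filter.mp he
    exact Finset.mem_filter.mpr ⟨heF, h1⟩
  -- C1 : each class has at most r elements
  have hC1 : ∀ j ∈ I, ∀ i, (cls i j).card ≤ r := by
    intro j hj i
    rw [← hcardc j hj]
    apply Finset.card_le_card_of_injOn hd
    · intro e he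
      obtain ⟨heF, h1, hsub⟩ := Finset.mem_filter.mp he
      exact hsub (hd_mem e h1)
    · intro e he f hf heq
      exact hd_inj i e (cls_sub_sing i j he) f (cls_sub_sing i j hf) heq
  -- the switching lemma: two class-j edges from distinct unused indices intersect
  have ext2 : ∀ j ∈ I, ∀ i1 ∉ I, ∀ i2 ∉ I, i1 ≠ i2 →
      ∀ e1 ∈ cls i1 j, ∀ e2 ∈ cls i2 j, ¬ Disjoint e1 e2 := by
    intro j hj i1 hi1 i2 hi2 h12 e1 he1 e2 he2 hd12
    obtain ⟨he1F, h1c, h1s⟩ := Finset.mem_filter.mp he1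
    obtain ⟨he2F, h2c, h2s⟩ := Finset.mem_filter.mp he2
    have hkey : ∀ e : Finset V, e ∩ S ⊆ c j → ∀ k ∈ I, k ≠ j → Disjoint e (c k) := by
      intro e hsub k hk hkj
      rw [Finset.disjoint_left]
      intro v hv hvk
      have hvS : v ∈ S := hsubS k hk hvk
      have hvj : v ∈ c j := hsub (Finset.mem_inter.mpr ⟨hv, hvS⟩)
      exact Finset.disjoint_left.mp (hdisj k hk j hj hkj) hvk hvj
    have hi1J : i1 ∉ insert i2 (I.erase j) := by
      intro h
      rcases Finset.mem_insert.mp h with h | h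
      · exact h12 h
      · exact hi1 (Finset.mem_of_mem_erase h)
    have hi2J : i2 ∉ I.erase j := fun h => hi2 (Finset.mem_of_mem_erase h)
    set J := insert i1 (insert i2 (I.erase j)) with hJ
    set d := Function.update (Function.update c i2 e2) i1 e1 with hdd
    have hd1 : d i1 = e1 := Function.update_self _ _ _
    have hd2 : d i2 = e2 := by
      rw [hdd, Function.update_of_ne h12.symm, Function.update_self]
    have hdk : ∀ k ∈ I.erase j, d k = c k := by
      intro k hk
      have hkI := Finset.mem_of_mem_erase hk
      have hk1 : k ≠ i1 := fun h => hi1 (h ▸ hkI)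
      have hk2 : k ≠ i2 := fun h => hi2 (h ▸ hkI)
      rw [hdd, Function.update_of_ne hk1, Function.update_of_ne hk2]
    have hdval : ∀ k ∈ J, (k = i1 ∧ d k = e1 ∧ d k ∩ S ⊆ c j ∧ d k ∈ F k) ∨
        (k = i2 ∧ d k = e2 ∧ d k ∩ S ⊆ c j ∧ d k ∈ F k) ∨
        (k ∈ I ∧ k ≠ j ∧ d k = c k ∧ d k ∈ F k) := by
      intro k hk
      rcases Finset.mem_insert.mp hk with hk1 | hk1
      · subst hk1; exact Or.inl ⟨rfl, hd1, by rw [hd1]; exact h1s, by rw [hd1]; exact he1F⟩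
      rcases Finset.mem_insert.mp hk1 with hk2 | hk2
      · subst hk2; exact Or.inr (Or.inl ⟨rfl, hd2, by rw [hd2]; exact h2s, by rw [hd2]; exact he2F⟩)
      · have hkI := Finset.mem_of_mem_erase hk2
        have hkj := Finset.ne_of_mem_erase hk2
        exact Or.inr (Or.inr ⟨hkI, hkj, hdk k hk2, by rw [hdk k hk2]; exact hc k hkI⟩)
    have hcardJ : J.card = q + 1 := by
      rw [hJ, Finset.card_insert_of_notMem hi1J, Finset.card_insert_of_notMem hi2J,
        Finset.card_erase_of_mem hj]
      have : 1 ≤ q := Finset.card_pos.mpr ⟨j, hj⟩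
      omega
    have hle := hmax J d (fun k hk => by
        rcases hdval k hk with ⟨_, _, _, h⟩ | ⟨_, _, _, h⟩ | ⟨_, _, _, h⟩ <;> exact h) ?_
    · rw [hcardJ] at hle; omega
    · intro k hk l hl hkl
      rcases hdval k hk with ⟨hk1, hke, hks, _⟩ | ⟨hk1, hke, hks, _⟩ | ⟨hkI, hkj, hke, _⟩ <;>
        rcases hdval l hl with ⟨hl1, hle', hls, _⟩ | ⟨hl1, hle', hls, _⟩ | ⟨hlI, hlj, hle', _⟩
      · exact absurd (hk1.trans hl1.symm) hkl
      · rw [hke, hle']; exact hd12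
      · rw [hke, hle']; exact hkey e1 h1s l hlI hlj
      · rw [hke, hle']; exact hd12.symm
      · exact absurd (hk1.trans hl1.symm) hkl
      · rw [hke, hle']; exact hkey e2 h2s l hlI hlj
      · rw [hke, hle']; exact (hkey e1 h1s k hkI hkj).symm
      · rw [hke, hle']; exact (hkey e2 h2s k hkI hkj).symm
      · rw [hke, hle']; exact hdisj k hkI l hlI hkl
  -- tail sets
  set U : Fin n → Fin n → Finset V := fun i j => (cls i j).biUnion (fun e => e \ S) with hU
  have tail_card : ∀ i j, ∀ e ∈ cls i j, (e \ S).card = r - 1 := by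
    intro i j e he
    obtain ⟨heF, h1, _⟩ := Finset.mem_filter.mp he
    have her : e.card = r := hunifE e (hedges i e heF)
    have := Finset.card_inter_add_card_sdiff e S
    omega
  have tails_disj : ∀ i j, ∀ e ∈ cls i j, ∀ f ∈ cls i j, e ≠ f → Disjoint (e \ S) (f \ S) := by
    intro i j e he f hf hef
    exact (hmatch i e (Finset.mem_filter.mp he).1 f (Finset.mem_filter.mp hf).1 hef).mono
      Finset.sdiff_subset Finset.sdiff_subset
  have cardU : ∀ j i, (cls i j).card = r → (U i j).card = r * (r - 1) := by
    intro j i hfull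
    rw [hU]
    simp only
    rw [Finset.card_biUnion (tails_disj i j), Finset.sum_congr rfl (tail_card i j),
      Finset.sum_const, smul_eq_mul, hfull]
  have hrr : r * (r - 1) = r * r - r := by
    have h1 : 1 ≤ r := by omega
    calc r * (r - 1) = r * r - r * 1 := by rw [Nat.mul_sub]
      _ = r * r - r := by rw [mul_one]
  -- pairwise structure of full classes
  have pairU : ∀ j ∈ I, ∀ i1 ∉ I, ∀ i2 ∉ I, i1 ≠ i2 →
      (cls i1 j).card = r → (cls i2 j).card = r →
      U i1 j = U i2 j ∧
      ∀ w ∈ U i1 j, ∃ e1 ∈ cls i1 j, ∃ e2 ∈ cls i2 j,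
        w ∈ e1 ∧ w ∈ e2 ∧ e1 ∩ S ≠ e2 ∩ S := by
    intro j hj i1 hi1 i2 hi2 h12 hf1 hf2
    have hcard1 : (U i1 j).card = r * (r - 1) := cardU j i1 hf1
    have hcard2 : (U i2 j).card = r * (r - 1) := cardU j i2 hf2
    set Tall := (cls i1 j) ×ˢ (cls i2 j) with hTall
    set T := Tall.filter (fun p => ¬ (p.1 ∩ S = p.2 ∩ S)) with hT
    have hTallcard : Tall.card = r * r := by rw [hTall, Finset.card_product, hf1, hf2]
    have hEqcard : (Tall.filter (fun p => p.1 ∩ S = p.2 ∩ S)).card ≤ r := by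
      rw [← hf1]
      apply Finset.card_le_card_of_injOn Prod.fst
      · intro p hp
        exact (Finset.mem_product.mp (Finset.mem_filter.mp hp).1).1
      · intro p hp p' hp' heq
        have hp2 := (Finset.mem_product.mp (Finset.mem_filter.mp hp).1).2
        have hp2' := (Finset.mem_product.mp (Finset.mem_filter.mp hp').1).2
        have he1 := (Finset.mem_filter.mp hp).2
        have he2 := (Finset.mem_filter.mp hp').2
        have hS2 : p.2 ∩ S = p'.2 ∩ S := by rw [← he1, ← he2, heq]
        have h1 : (p.2 ∩ S).card = 1 := (Finset.mem_filter.mp hp2).2.1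
        have h1' : (p'.2 ∩ S).card = 1 := (Finset.mem_filter.mp hp2').2.1
        have hhd : hd p.2 = hd p'.2 := by
          have := hd_spec p.2 h1
          have h2 := hd_spec p'.2 h1'
          rw [this, h2] at hS2
          exact Finset.singleton_injective hS2
        have : p.2 = p'.2 :=
          hd_inj i2 p.2 (cls_sub_sing i2 j hp2) p'.2 (cls_sub_sing i2 j hp2') hhd
        exact Prod.ext heq this
    have hTge : r * r - r ≤ T.card := by
      have := Finset.card_filter_add_card_filter_not
        (s := Tall) (p := fun p => p.1 ∩ S = p.2 ∩ S)
      rw [hTallcard] at this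
      rw [hT]
      omega
    have hwitne : ∀ p ∈ T, ((p.1 ∩ p.2) \ S).Nonempty := by
      intro p hp
      obtain ⟨hpT, hpne⟩ := Finset.mem_filter.mp hp
      obtain ⟨hp1, hp2⟩ := Finset.mem_product.mp hpT
      have hnd : ¬ Disjoint p.1 p.2 := ext2 j hj i1 hi1 i2 hi2 h12 p.1 hp1 p.2 hp2
      obtain ⟨v, hv⟩ := Finset.not_disjoint_iff_nonempty_inter.mp hnd
      refine ⟨v, Finset.mem_sdiff.mpr ⟨hv, ?_⟩⟩
      intro hvS
      obtain ⟨hv1, hv2⟩ := Finset.mem_inter.mp hv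
      have h1 : (p.1 ∩ S).card = 1 := (Finset.mem_filter.mp hp1).2.1
      have h2 : (p.2 ∩ S).card = 1 := (Finset.mem_filter.mp hp2).2.1
      have hveq1 : v = hd p.1 := by
        have := hd_spec p.1 h1
        have hm : v ∈ p.1 ∩ S := Finset.mem_inter.mpr ⟨hv1, hvS⟩
        rw [this] at hm
        exact Finset.mem_singleton.mp hm
      have hveq2 : v = hd p.2 := by
        have := hd_spec p.2 h2
        have hm : v ∈ p.2 ∩ S := Finset.mem_inter.mpr ⟨hv2, hvS⟩
        rw [this] at hm
        exact Finset.mem_singleton.mp hm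
      apply hpne
      rw [hd_spec p.1 h1, hd_spec p.2 h2, ← hveq1, ← hveq2]
    set wit : Finset V × Finset V → V :=
      fun p => if h : ((p.1 ∩ p.2) \ S).Nonempty then h.choose else Classical.choice hVne
      with hwit
    have hwitmem : ∀ p ∈ T, wit p ∈ (p.1 ∩ p.2) \ S := by
      intro p hp
      have := hwitne p hp
      rw [hwit]; simp only [dif_pos this]; exact this.choose_spec
    have hmapsto : ∀ p ∈ T, wit p ∈ U i1 j ∩ U i2 j := by
      intro p hp
      obtain ⟨hp1, hp2⟩ := Finset.mem_product.mp (Finset.mem_filter.mp hp).1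
      have hw := hwitmem p hp
      obtain ⟨hwin, hwS⟩ := Finset.mem_sdiff.mp hw
      obtain ⟨hw1, hw2⟩ := Finset.mem_inter.mp hwin
      refine Finset.mem_inter.mpr ⟨?_, ?_⟩
      · exact Finset.mem_biUnion.mpr ⟨p.1, hp1, Finset.mem_sdiff.mpr ⟨hw1, hwS⟩⟩
      · exact Finset.mem_biUnion.mpr ⟨p.2, hp2, Finset.mem_sdiff.mpr ⟨hw2, hwS⟩⟩
    have huniq1 : ∀ w : V, ∀ e ∈ cls i1 j, ∀ f ∈ cls i1 j, w ∈ e → w ∈ f → e = f := by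
      intro w e he f hf hwe hwf
      by_contra hne
      exact Finset.disjoint_left.mp
        (hmatch i1 e (Finset.mem_filter.mp he).1 f (Finset.mem_filter.mp hf).1 hne) hwe hwf
    have huniq2 : ∀ w : V, ∀ e ∈ cls i2 j, ∀ f ∈ cls i2 j, w ∈ e → w ∈ f → e = f := by
      intro w e he f hf hwe hwf
      by_contra hne
      exact Finset.disjoint_left.mp
        (hmatch i2 e (Finset.mem_filter.mp he).1 f (Finset.mem_filter.mp hf).1 hne) hwe hwf
    have hinjwit : ∀ p ∈ T, ∀ p' ∈ T, wit p = wit p' → p = p' := by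
      intro p hp p' hp' heq
      obtain ⟨hp1, hp2⟩ := Finset.mem_product.mp (Finset.mem_filter.mp hp).1
      obtain ⟨hp1', hp2'⟩ := Finset.mem_product.mp (Finset.mem_filter.mp hp').1
      have hw := Finset.mem_inter.mp (Finset.mem_sdiff.mp (hwitmem p hp)).1
      have hw' := Finset.mem_inter.mp (Finset.mem_sdiff.mp (hwitmem p' hp')).1
      rw [heq] at hw
      exact Prod.ext (huniq1 (wit p') p.1 hp1 p'.1 hp1' hw.1 hw'.1)
        (huniq2 (wit p') p.2 hp2 p'.2 hp2' hw.2 hw'.2)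
    have hTle : T.card ≤ (U i1 j ∩ U i2 j).card :=
      Finset.card_le_card_of_injOn wit hmapsto (fun p hp p' hp' => hinjwit p hp p' hp')
    have hle2 : (U i1 j ∩ U i2 j).card ≤ r * (r - 1) := by
      rw [← hcard1]
      exact Finset.card_le_card Finset.inter_subset_left
    have hintercard : (U i1 j ∩ U i2 j).card = r * (r - 1) := by omega
    have hUU1 : U i1 j ∩ U i2 j = U i1 j :=
      Finset.eq_of_subset_of_card_le Finset.inter_subset_left (by omega)
    have hUU2 : U i1 j ∩ U i2 j = U i2 j :=
      Finset.eq_of_subset_of_card_le Finset.inter_subset_right (by omega)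
    constructor
    · rw [← hUU1, hUU2]
    · intro w hw
      have hwin : w ∈ U i1 j ∩ U i2 j := by rw [hUU1]; exact hw
      have hTcard : (U i1 j ∩ U i2 j).card ≤ T.card := by omega
      obtain ⟨p, hp, hwp⟩ := Finset.surj_on_of_inj_on_of_card_le (fun p _ => wit p)
        (fun p hp => hmapsto p hp) (fun p p' hp hp' h => hinjwit p hp p' hp' h) hTcard w hwin
      obtain ⟨hp1, hp2⟩ := Finset.mem_product.mp (Finset.mem_filter.mp hp).1
      have hne := (Finset.mem_filter.mp hp).2
      have hw' := Finset.mem_inter.mp (Finset.mem_sdiff.mp (hwitmem p hp)).1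
      exact ⟨p.1, hp1, p.2, hp2, by rw [hwp]; exact hw'.1, by rw [hwp]; exact hw'.2, hne⟩
  -- at most r full classes per j
  have hC2 : ∀ j ∈ I, (Finset.univ.filter (fun i => i ∉ I ∧ (cls i j).card = r)).card ≤ r := by
    intro j hj
    set P := Finset.univ.filter (fun i => i ∉ I ∧ (cls i j).card = r) with hP
    by_contra hlt
    push_neg at hlt
    have hPne : P.Nonempty := Finset.card_pos.mp (by omega)
    obtain ⟨i0, hi0⟩ := hPne
    obtain ⟨hi0I, hi0full⟩ := (Finset.mem_filter.mp hi0).2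
    have hU0 : (U i0 j).Nonempty := by
      apply Finset.card_pos.mp
      rw [cardU j i0 hi0full]
      have h1 : 1 ≤ r - 1 := by omega
      calc 0 < 1 * 1 := by norm_num
        _ ≤ r * (r - 1) := Nat.mul_le_mul (by omega) h1
    obtain ⟨w, hw⟩ := hU0
    have hwU : ∀ i ∈ P, w ∈ U i j := by
      intro i hi
      obtain ⟨hiI, hifull⟩ := (Finset.mem_filter.mp hi).2
      by_cases h : i = i0
      · subst h; exact hw
      · rw [(pairU j hj i hiI i0 hi0I h hifull hi0full).1]; exact hw
    set G : Fin n → Finset V :=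
      fun i => if h : ∃ e ∈ cls i j, w ∈ e then h.choose else ∅ with hG
    have hGspec : ∀ i ∈ P, G i ∈ cls i j ∧ w ∈ G i := by
      intro i hi
      obtain ⟨e, he, hwe⟩ := Finset.mem_biUnion.mp (hwU i hi)
      have hex : ∃ e ∈ cls i j, w ∈ e := ⟨e, he, (Finset.mem_sdiff.mp hwe).1⟩
      rw [hG]; simp only [dif_pos hex]
      exact hex.choose_spec
    have hGuniq : ∀ i ∈ P, ∀ e ∈ cls i j, w ∈ e → G i = e := by
      intro i hi e he hwe
      obtain ⟨hGc, hGw⟩ := hGspec i hi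
      by_contra hne
      exact Finset.disjoint_left.mp
        (hmatch i _ (Finset.mem_filter.mp hGc).1 _ (Finset.mem_filter.mp he).1 hne) hGw hwe
    have hinj : P.card ≤ (c j).card := by
      apply Finset.card_le_card_of_injOn (fun i => hd (G i))
      · intro i hi
        obtain ⟨hGc, _⟩ := hGspec i hi
        obtain ⟨_, h1, hs⟩ := Finset.mem_filter.mp hGc
        exact hs (hd_mem _ h1)
      · intro i hip i' hip' heq
        by_contra hne
        obtain ⟨hiI, hifull⟩ := (Finset.mem_filter.mp (Finset.mem_coe.mp hip)).2
        obtain ⟨hiI', hifull'⟩ := (Finset.mem_filter.mp (Finset.mem_coe.mp hip')).2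
        obtain ⟨e1, he1, e2, he2, hwe1, hwe2, hne'⟩ :=
          (pairU j hj i hiI i' hiI' hne hifull hifull').2 w (hwU i hip)
        have hg1 : G i = e1 := hGuniq i hip e1 he1 hwe1
        have hg2 : G i' = e2 := hGuniq i' hip' e2 he2 hwe2
        apply hne'
        have h1 : (e1 ∩ S).card = 1 := (Finset.mem_filter.mp he1).2.1
        have h2 : (e2 ∩ S).card = 1 := (Finset.mem_filter.mp he2).2.1
        rw [hd_spec e1 h1, hd_spec e2 h2, ← hg1, ← hg2]
        exact congrArg (fun v => ({v} : Finset V)) heq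
    rw [hcardc j hj] at hinj
    omega
  -- step C : per-j bound on the classes
  have hC : ∀ j ∈ I, ∑ i ∈ Iᶜ, (cls i j).card ≤ (r - 1) * (n - q) + r := by
    intro j hj
    have hsub : Iᶜ.filter (fun i => (cls i j).card = r) ⊆
        Finset.univ.filter (fun i => i ∉ I ∧ (cls i j).card = r) := by
      intro i hi
      obtain ⟨hic, hir⟩ := Finset.mem_filter.mp hi
      exact Finset.mem_filter.mpr ⟨Finset.mem_univ i, Finset.mem_compl.mp hic, hir⟩
    have hfiltb : (Iᶜ.filter (fun i => (cls i j).card = r)).card ≤ r :=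
      le_trans (Finset.card_le_card hsub) (hC2 j hj)
    have hcompl : (Iᶜ : Finset (Fin n)).card = n - q := by
      rw [Finset.card_compl, Fintype.card_fin]
    calc ∑ i ∈ Iᶜ, (cls i j).card
        ≤ ∑ i ∈ Iᶜ, ((r - 1) + (if (cls i j).card = r then 1 else 0)) := by
          apply Finset.sum_le_sum
          intro i _
          have := hC1 j hj i
          split <;> omega
      _ = (r - 1) * (n - q) + (Iᶜ.filter (fun i => (cls i j).card = r)).card := by
          rw [Finset.sum_add_distrib, Finset.sum_const, hcompl, smul_eq_mul, mul_comm,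
            Finset.card_filter]
      _ ≤ (r - 1) * (n - q) + r := by omega
  -- assemble the key natural-number inequality
  have hcompl : (Iᶜ : Finset (Fin n)).card = n - q := by
    rw [Finset.card_compl, Fintype.card_fin]
  have key : (n - q) * (2 * n) ≤ q * ((r - 1) * (n - q) + r) + (n - q) * (r * q) := by
    have h1 : (n - q) * (2 * n) ≤ (∑ i ∈ Iᶜ, (sing i).card) + (n - q) * (r * q) := by
      calc (n - q) * (2 * n) = ∑ _i ∈ Iᶜ, 2 * n := by
            rw [Finset.sum_const, hcompl, smul_eq_mul]
        _ ≤ ∑ i ∈ Iᶜ, ((sing i).card + r * q) :=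
            Finset.sum_le_sum (fun i hi => hA i (Finset.mem_compl.mp hi))
        _ = (∑ i ∈ Iᶜ, (sing i).card) + (n - q) * (r * q) := by
            rw [Finset.sum_add_distrib, Finset.sum_const, hcompl, smul_eq_mul]
    have h2 : ∑ i ∈ Iᶜ, (sing i).card ≤ ∑ i ∈ Iᶜ, ∑ j ∈ I, (cls i j).card :=
      Finset.sum_le_sum (fun i _ => hB i)
    have h3 : ∑ i ∈ Iᶜ, ∑ j ∈ I, (cls i j).card = ∑ j ∈ I, ∑ i ∈ Iᶜ, (cls i j).card :=
      Finset.sum_comm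
    have h4 : ∑ j ∈ I, ∑ i ∈ Iᶜ, (cls i j).card ≤ q * ((r - 1) * (n - q) + r) := by
      calc ∑ j ∈ I, ∑ i ∈ Iᶜ, (cls i j).card ≤ ∑ _j ∈ I, ((r - 1) * (n - q) + r) :=
            Finset.sum_le_sum (fun j hj => hC j hj)
        _ = q * ((r - 1) * (n - q) + r) := by rw [Finset.sum_const, smul_eq_mul]
    omega
  -- cast to the reals and conclude
  have hkeyR : ((n : ℝ) - q) * (2 * n) ≤
      q * (((r : ℝ) - 1) * ((n : ℝ) - q) + r) + ((n : ℝ) - q) * ((r : ℝ) * q) := by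
    have hcast := (Nat.cast_le (α := ℝ)).mpr key
    push_cast at hcast
    rw [Nat.cast_sub hqn, Nat.cast_sub (show 1 ≤ r by omega)] at hcast
    push_cast at hcast
    convert hcast using 2
  nlinarith [hkeyR]
end

section
/- Let G be a triangle-free graph, let F_1, …, F_n be matchings of size n in G, and let R be a rainbow matching of maximum size. Then for every edge e ∈ R, there is at most one unrepresented matching F_i for which there exist two edges of F_i each intersecting e and intersecting no other edge of R. -/
/-- Two graph edges intersect (share a vertex). -/
def Meets {V : Type*} (e f : Sym2 V) : Prop := ∃ v, v ∈ e ∧ v ∈ f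

/-- `g` intersects `e` and no other edge of the matching `R`. -/
def MeetsOnly {V : Type*} (R : Finset (Sym2 V)) (g e : Sym2 V) : Prop :=
  Meets g e ∧ ∀ f ∈ R, f ≠ e → ¬ Meets g f

open SimpleGraph

lemma tri_aux {V : Type*} (G : SimpleGraph V)
    (htf : ∀ (v : V) (w : G.Walk v v), w.IsCycle → w.length ≠ 3)
    {x y z : V} (hxy : G.Adj x y) (hyz : G.Adj y z) (hzx : G.Adj z x) : False := by
  have h1 : x ≠ y := hxy.ne
  have h2 : y ≠ z := hyz.ne
  have h3 : z ≠ x := hzx.ne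
  apply htf x (Walk.cons hxy (Walk.cons hyz (Walk.cons hzx Walk.nil)))
  · constructor
    · constructor
      · simp [Walk.isTrail_def, Sym2.eq_iff]
        refine ⟨⟨?_, ?_⟩, ?_⟩ <;> tauto
      · simp
    · simp
      exact ⟨⟨h2, h1.symm⟩, h3⟩
  · simp

lemma split_aux {V : Type*} {M : Finset (Sym2 V)}
    (hm : ∀ e ∈ M, ∀ f ∈ M, e ≠ f → ∀ v, v ∈ e → v ∉ f)
    {g₁ g₂ : Sym2 V} (hg₁ : g₁ ∈ M) (hg₂ : g₂ ∈ M) (hne : g₁ ≠ g₂)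
    {x y : V} (hxy : x ≠ y)
    (m₁ : Meets g₁ s(x,y)) (m₂ : Meets g₂ s(x,y)) :
    (x ∈ g₁ ∧ y ∉ g₁ ∧ y ∈ g₂ ∧ x ∉ g₂) ∨ (x ∈ g₂ ∧ y ∉ g₂ ∧ y ∈ g₁ ∧ x ∉ g₁) := by
  have h1 : ¬(x ∈ g₁ ∧ y ∈ g₁) := by
    rintro ⟨hx, hy⟩
    have hg : g₁ = s(x,y) := (Sym2.mem_and_mem_iff hxy).1 ⟨hx, hy⟩
    obtain ⟨v, hv1, hv2⟩ := m₂
    exact hm g₂ hg₂ g₁ hg₁ hne.symm v hv1 (hg ▸ hv2)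
  have h2 : ¬(x ∈ g₂ ∧ y ∈ g₂) := by
    rintro ⟨hx, hy⟩
    have hg : g₂ = s(x,y) := (Sym2.mem_and_mem_iff hxy).1 ⟨hx, hy⟩
    obtain ⟨v, hv1, hv2⟩ := m₁
    exact hm g₁ hg₁ g₂ hg₂ hne v hv1 (hg ▸ hv2)
  have o₁ : x ∈ g₁ ∨ y ∈ g₁ := by
    obtain ⟨v, hvg, hve⟩ := m₁
    rcases Sym2.mem_iff.1 hve with rfl | rfl <;> tauto
  have o₂ : x ∈ g₂ ∨ y ∈ g₂ := by
    obtain ⟨v, hvg, hve⟩ := m₂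
    rcases Sym2.mem_iff.1 hve with rfl | rfl <;> tauto
  have hx12 : ¬(x ∈ g₁ ∧ x ∈ g₂) := fun ⟨h, h'⟩ => hm g₁ hg₁ g₂ hg₂ hne x h h'
  have hy12 : ¬(y ∈ g₁ ∧ y ∈ g₂) := fun ⟨h, h'⟩ => hm g₁ hg₁ g₂ hg₂ hne y h h'
  tauto

/-- In a triangle-free graph, with `F₁, …, Fₙ` matchings of size `n`
and `R` (given by indices `I` and choice `c`) a maximum-size rainbow matching, for every
`e ∈ R` there is at most one unrepresented matching `Fᵢ` having two edges each
intersecting `e` and no other edge of `R`. -/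
theorem stmt_10 {V : Type*} [DecidableEq V] (G : SimpleGraph V) (n : ℕ)
    (htf : ∀ (v : V) (w : G.Walk v v), w.IsCycle → w.length ≠ 3)
    (F : Fin n → Finset (Sym2 V))
    (hedges : ∀ i, ∀ e ∈ F i, e ∈ G.edgeSet)
    (hmatch : ∀ i, ∀ e ∈ F i, ∀ f ∈ F i, e ≠ f → ∀ v, v ∈ e → v ∉ f)
    (hsize : ∀ i, (F i).card = n)
    (I : Finset (Fin n)) (c : Fin n → Sym2 V)
    (hc : ∀ i ∈ I, c i ∈ F i)
    (hdisj : ∀ i ∈ I, ∀ j ∈ I, i ≠ j → ∀ v, v ∈ c i → v ∉ c j)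
    (hmax : ∀ (J : Finset (Fin n)) (d : Fin n → Sym2 V),
      (∀ i ∈ J, d i ∈ F i) →
      (∀ i ∈ J, ∀ j ∈ J, i ≠ j → ∀ v, v ∈ d i → v ∉ d j) →
      J.card ≤ I.card)
    (e : Sym2 V) (he : e ∈ I.image c) :
    {i : Fin n | i ∉ I ∧ ∃ g₁ ∈ F i, ∃ g₂ ∈ F i, g₁ ≠ g₂ ∧
      MeetsOnly (I.image c) g₁ e ∧ MeetsOnly (I.image c) g₂ e}.Subsingleton := by
  intro i hi j hj
  by_contra hij
  simp only [Set.mem_setOf_eq] at hi hj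
  obtain ⟨hiI, g₁, hg₁F, g₂, hg₂F, hg12, ⟨mg₁, og₁⟩, ⟨mg₂, og₂⟩⟩ := hi
  obtain ⟨hjI, h₁, hh₁F, h₂, hh₂F, hh12, ⟨mh₁, oh₁⟩, ⟨mh₂, oh₂⟩⟩ := hj
  obtain ⟨i₀, hi₀I, hci₀⟩ := Finset.mem_image.1 he
  -- e is an edge, so e = s(x,y) with x ≠ y
  have heE : e ∈ G.edgeSet := hci₀ ▸ hedges i₀ (c i₀) (hc i₀ hi₀I)
  obtain ⟨⟨x, y⟩, hxy'⟩ := Quot.exists_rep e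
  have hexy : e = s(x, y) := hxy'.symm
  subst hexy
  have hadjxy : G.Adj x y := heE
  have hxy : x ≠ y := hadjxy.ne
  -- orient the two pairs
  have si := split_aux (hmatch i) hg₁F hg₂F hg12 hxy mg₁ mg₂
  have sj := split_aux (hmatch j) hh₁F hh₂F hh12 hxy mh₁ mh₂
  -- extract gx ∈ F i containing x (and its MeetsOnly), hy ∈ F j containing y
  obtain ⟨gx, hgxF, ogx, hxgx, hygx⟩ :
      ∃ gx, gx ∈ F i ∧ (∀ f ∈ I.image c, f ≠ s(x,y) → ¬ Meets gx f) ∧ x ∈ gx ∧ y ∉ gx := by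
    rcases si with ⟨h1, h2, _, _⟩ | ⟨h1, h2, _, _⟩
    · exact ⟨g₁, hg₁F, og₁, h1, h2⟩
    · exact ⟨g₂, hg₂F, og₂, h1, h2⟩
  obtain ⟨hy, hhyF, ohy, hyhy, hxhy⟩ :
      ∃ hy, hy ∈ F j ∧ (∀ f ∈ I.image c, f ≠ s(x,y) → ¬ Meets hy f) ∧ y ∈ hy ∧ x ∉ hy := by
    rcases sj with ⟨_, _, h3, h4⟩ | ⟨_, _, h3, h4⟩
    · exact ⟨h₂, hh₂F, oh₂, h3, h4⟩
    · exact ⟨h₁, hh₁F, oh₁, h3, h4⟩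
  -- write gx = s(x,a), hy = s(y,q)
  obtain ⟨a, rfl⟩ := Sym2.mem_iff_exists.1 hxgx
  obtain ⟨q, rfl⟩ := Sym2.mem_iff_exists.1 hyhy
  have hadjxa : G.Adj x a := hedges i _ hgxF
  have hadjyq : G.Adj y q := hedges j _ hhyF
  have hay : a ≠ y := fun h => hygx (by simp [h])
  have hqx : q ≠ x := fun h => hxhy (by simp [h])
  have hax : a ≠ x := fun h => hadjxa.ne h.symm
  have hqy : q ≠ y := fun h => hadjyq.ne h.symm
  -- a ≠ q, else triangle x y a
  have haq : a ≠ q := by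
    rintro rfl
    exact tri_aux G htf hadjxy hadjyq hadjxa.symm
  -- c k ≠ e for k ∈ I, k ≠ i₀
  have hkne : ∀ k ∈ I, k ≠ i₀ → c k ≠ s(x,y) := by
    intro k hk hki₀ hck
    exact hdisj k hk i₀ hi₀I hki₀ x (by simp [hck]) (by simp [hci₀])
  -- build a larger rainbow matching
  set J : Finset (Fin n) := insert i (insert j (I.erase i₀)) with hJ
  set d : Fin n → Sym2 V := fun k => if k = i then s(x,a) else if k = j then s(y,q) else c k with hd
  have hiJmem : i ∉ insert j (I.erase i₀) := by
    simp only [Finset.mem_insert, Finset.mem_erase]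
    rintro (rfl | ⟨-, h⟩)
    · exact hij rfl
    · exact hiI h
  have hjJmem : j ∉ I.erase i₀ := fun h => hjI (Finset.mem_of_mem_erase h)
  have hdi : d i = s(x,a) := by simp [hd]
  have hdj : d j = s(y,q) := by simp [hd, Ne.symm hij]
  have hdk : ∀ k ∈ I.erase i₀, d k = c k := by
    intro k hk
    have hkI := Finset.mem_of_mem_erase hk
    have h1 : k ≠ i := fun h => hiI (h ▸ hkI)
    have h2 : k ≠ j := fun h => hjI (h ▸ hkI)
    simp [hd, h1, h2]
  have hmem : ∀ k ∈ J, d k ∈ F k := by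
    intro k hk
    rcases Finset.mem_insert.1 hk with rfl | hk
    · rw [hdi]; exact hgxF
    rcases Finset.mem_insert.1 hk with rfl | hk
    · rw [hdj]; exact hhyF
    · rw [hdk k hk]; exact hc k (Finset.mem_of_mem_erase hk)
  -- disjointness helpers
  have dgxhy : ∀ v, v ∈ s(x,a) → v ∉ s(y,q) := by
    intro v hv hv'
    rcases Sym2.mem_iff.1 hv with rfl | rfl <;> rcases Sym2.mem_iff.1 hv' with h | h
    · exact hxy h
    · exact hqx h.symm
    · exact hay h
    · exact haq h
  have dgxc : ∀ k ∈ I.erase i₀, ∀ v, v ∈ s(x,a) → v ∉ c k := by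
    intro k hk v hv hv'
    have hkI := Finset.mem_of_mem_erase hk
    have hkne' := hkne k hkI (Finset.ne_of_mem_erase hk)
    exact ogx (c k) (Finset.mem_image.2 ⟨k, hkI, rfl⟩) hkne' ⟨v, hv, hv'⟩
  have dhyc : ∀ k ∈ I.erase i₀, ∀ v, v ∈ s(y,q) → v ∉ c k := by
    intro k hk v hv hv'
    have hkI := Finset.mem_of_mem_erase hk
    have hkne' := hkne k hkI (Finset.ne_of_mem_erase hk)
    exact ohy (c k) (Finset.mem_image.2 ⟨k, hkI, rfl⟩) hkne' ⟨v, hv, hv'⟩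
  have hdisj' : ∀ k ∈ J, ∀ l ∈ J, k ≠ l → ∀ v, v ∈ d k → v ∉ d l := by
    intro k hk l hl hkl v hvk hvl
    rcases Finset.mem_insert.1 hk with rfl | hk' <;>
      [skip; rcases Finset.mem_insert.1 hk' with rfl | hk''] <;>
      rcases Finset.mem_insert.1 hl with rfl | hl' <;>
      [skip; skip; skip; rcases Finset.mem_insert.1 hl' with rfl | hl'';
       skip; rcases Finset.mem_insert.1 hl' with rfl | hl'']
    · exact hkl rfl
    · rcases Finset.mem_insert.1 hl' with rfl | hl''
      · rw [hdi] at hvk; rw [hdj] at hvl; exact dgxhy v hvk hvl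
      · rw [hdi] at hvk; rw [hdk l hl''] at hvl; exact dgxc l hl'' v hvk hvl
    · rw [hdj] at hvk; rw [hdi] at hvl; exact dgxhy v hvl hvk
    · exact hkl rfl
    · rw [hdj] at hvk; rw [hdk l hl''] at hvl; exact dhyc l hl'' v hvk hvl
    · rw [hdk k hk''] at hvk; rw [hdi] at hvl; exact dgxc k hk'' v hvl hvk
    · rw [hdk k hk''] at hvk; rw [hdj] at hvl; exact dhyc k hk'' v hvl hvk
    · rw [hdk k hk''] at hvk; rw [hdk l hl''] at hvl
      exact hdisj k (Finset.mem_of_mem_erase hk'') l (Finset.mem_of_mem_erase hl'') hkl v hvk hvl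
  have hcard := hmax J d hmem hdisj'
  have hJcard : J.card = I.card + 1 := by
    rw [hJ, Finset.card_insert_of_notMem hiJmem, Finset.card_insert_of_notMem hjJmem,
      Finset.card_erase_of_mem hi₀I]
    have : 1 ≤ I.card := Finset.card_pos.2 ⟨i₀, hi₀I⟩
    omega
  omega
end

section
/- Let G be a graph with no cycle of length 3 and no cycle of length 5, let F_1, …, F_n be matchings of size n in G, and let R be a rainbow matching of maximum size q. For e ∈ R let HW(e) be the set of unrepresented matchings F_i for which e is half-F_i-wasteful. Then Σ_{e ∈ R} |HW(e)| ≤ 2q. -/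
/-- The pair `{e, f}` of edges of `R` is half-`A`-wasteful: there are edges
`g_e, g_f, g_{ef} ∈ A` such that `g_e` intersects `e` and no other edge of `R`, `g_f`
intersects `f` and no other edge of `R`, and `g_{ef}` intersects both `e` and `f`. -/
def HalfWastefulPair {V : Type*} (R A : Finset (Sym2 V)) (e f : Sym2 V) : Prop :=
  ∃ ge ∈ A, ∃ gf ∈ A, ∃ gef ∈ A,
    MeetsOnly R ge e ∧ MeetsOnly R gf f ∧ Meets gef e ∧ Meets gef f

/-- The edge `e ∈ R` is half-`A`-wasteful: some pair `{e, f}` with `f ∈ R` is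
half-`A`-wasteful. -/
def HalfWasteful {V : Type*} (R A : Finset (Sym2 V)) (e : Sym2 V) : Prop :=
  ∃ f ∈ R, f ≠ e ∧ HalfWastefulPair R A e f

/-- The number of unrepresented matchings `F i` (i.e. `i ∉ I`) for which `e` is
half-`F i`-wasteful. -/
noncomputable def hwDeg {V : Type*} {n : ℕ} (F : Fin n → Finset (Sym2 V))
    (I : Finset (Fin n)) (R : Finset (Sym2 V)) (e : Sym2 V) : ℕ :=
  {i : Fin n | i ∉ I ∧ HalfWasteful R (F i) e}.ncard

lemma meets_symm {V : Type*} {e f : Sym2 V} (h : Meets e f) : Meets f e := by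
  obtain ⟨v, h1, h2⟩ := h; exact ⟨v, h2, h1⟩

lemma meets_elim {V : Type*} {α β γ δ : V} (h : Meets s(α, β) s(γ, δ)) :
    α = γ ∨ α = δ ∨ β = γ ∨ β = δ := by
  obtain ⟨v, h1, h2⟩ := h
  simp only [Sym2.mem_iff] at h1 h2
  aesop

lemma two_mem {V : Type*} {z : Sym2 V} {p r : V} (hp : p ∈ z) (hr : r ∈ z) (h : p ≠ r) :
    z = s(p, r) := by
  induction z using Sym2.ind with
  | _ x y =>
    simp only [Sym2.mem_iff] at hp hr
    rw [Sym2.eq_iff]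
    aesop

lemma edge_other {V : Type*} {z : Sym2 V} (hz : ¬z.IsDiag) {a : V} (ha : a ∈ z) :
    ∃ x, x ≠ a ∧ z = s(a, x) := by
  induction z using Sym2.ind with
  | _ x y =>
    simp only [Sym2.mem_iff] at ha
    rw [Sym2.mk_isDiag_iff] at hz
    rcases ha with rfl | rfl
    · exact ⟨y, fun h => hz h.symm, rfl⟩
    · exact ⟨x, hz, Sym2.eq_swap⟩

lemma pair_data {V : Type*} {G : SimpleGraph V}
    {A : Finset (Sym2 V)} (hA : ∀ g ∈ A, g ∈ G.edgeSet)
    (hAm : ∀ g ∈ A, ∀ h ∈ A, g ≠ h → ∀ v, v ∈ g → v ∉ h)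
    {R : Finset (Sym2 V)} (hR : ∀ e ∈ R, ∀ f ∈ R, e ≠ f → ¬Meets e f)
    (hRe : ∀ e ∈ R, e ∈ G.edgeSet)
    {e f : Sym2 V} (he : e ∈ R) (hf : f ∈ R) (hef : e ≠ f)
    (h : HalfWastefulPair R A e f) :
    ∃ a x p r b y : V, e = s(a, p) ∧ f = s(b, r) ∧ a ≠ p ∧ b ≠ r ∧ p ≠ r ∧
      s(a, x) ∈ A ∧ s(b, y) ∈ A ∧ s(p, r) ∈ A ∧ a ≠ x ∧ b ≠ y ∧
      MeetsOnly R s(a, x) e ∧ MeetsOnly R s(b, y) f ∧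
      (∀ g ∈ R, x ∉ g) ∧ (∀ g ∈ R, y ∉ g) := by
  obtain ⟨ge, hge, gf, hgf, gef, hgef, hoe, hof, hme, hmf⟩ := h
  obtain ⟨p, hpef, hpe⟩ := hme
  obtain ⟨r, href, hrf⟩ := hmf
  have hpr : p ≠ r := by rintro rfl; exact hR e he f hf hef ⟨p, hpe, hrf⟩
  have hgefpr : gef = s(p, r) := two_mem hpef href hpr
  -- ge ≠ gef
  have hgene : ge ≠ gef := by
    rintro rfl
    exact hoe.2 f hf (fun hh => hef hh.symm) ⟨r, href, hrf⟩
  have hpge : p ∉ ge := fun hpg => hAm gef hgef ge hge (Ne.symm hgene) p hpef hpg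
  obtain ⟨a, hage, hae⟩ := hoe.1
  have hap : a ≠ p := fun hh => hpge (hh ▸ hage)
  have heap : e = s(a, p) := two_mem hae hpe hap
  -- ge is nondiag
  have hgend : ¬ge.IsDiag := (G.not_isDiag_of_mem_edgeSet (hA ge hge))
  obtain ⟨x, hxa, hgeax⟩ := edge_other hgend hage
  have hxe : x ∉ e := by
    rw [heap]
    rw [Sym2.mem_iff]
    rintro (rfl | rfl)
    · exact hxa rfl
    · exact hpge (hgeax ▸ Sym2.mem_mk_right a x)
  have hxun : ∀ g ∈ R, x ∉ g := by
    intro g hg hxg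
    by_cases hge' : g = e
    · exact hxe (hge' ▸ hxg)
    · exact hoe.2 g hg hge' ⟨x, hgeax ▸ Sym2.mem_mk_right a x, hxg⟩
  -- same for f side
  have hgfne : gf ≠ gef := by
    rintro rfl
    exact hof.2 e he hef ⟨p, hpef, hpe⟩
  have hrgf : r ∉ gf := fun hrg => hAm gef hgef gf hgf (Ne.symm hgfne) r href hrg
  obtain ⟨b, hbgf, hbf⟩ := hof.1
  have hbr : b ≠ r := fun hh => hrgf (hh ▸ hbgf)
  have hfbr : f = s(b, r) := two_mem hbf hrf hbr
  have hgfnd : ¬gf.IsDiag := (G.not_isDiag_of_mem_edgeSet (hA gf hgf))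
  obtain ⟨y, hyb, hgfby⟩ := edge_other hgfnd hbgf
  have hyf : y ∉ f := by
    rw [hfbr, Sym2.mem_iff]
    rintro (rfl | rfl)
    · exact hyb rfl
    · exact hrgf (hgfby ▸ Sym2.mem_mk_right b y)
  have hyun : ∀ g ∈ R, y ∉ g := by
    intro g hg hyg
    by_cases hgf' : g = f
    · exact hyf (hgf' ▸ hyg)
    · exact hof.2 g hg hgf' ⟨y, hgfby ▸ Sym2.mem_mk_right b y, hyg⟩
  exact ⟨a, x, p, r, b, y, heap, hfbr, hap, hbr, hpr,
    hgeax ▸ hge, hgfby ▸ hgf, hgefpr ▸ hgef, fun hh => hxa hh.symm, fun hh => hyb hh.symm,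
    hgeax ▸ hoe, hgfby ▸ hof, hxun, hyun⟩

lemma not_three_mem {V : Type*} {z : Sym2 V} {a b c : V}
    (hab : a ≠ b) (hac : a ≠ c) (hbc : b ≠ c)
    (ha : a ∈ z) (hb : b ∈ z) (hc : c ∈ z) : False := by
  induction z using Sym2.ind with
  | _ x y =>
    simp only [Sym2.mem_iff] at ha hb hc
    aesop

lemma partner_unique {V : Type*} {A R : Finset (Sym2 V)}
    (hAm : ∀ g ∈ A, ∀ h ∈ A, g ≠ h → ∀ v, v ∈ g → v ∉ h)
    (hR : ∀ e ∈ R, ∀ f ∈ R, e ≠ f → ¬Meets e f)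
    {e f f' : Sym2 V} (he : e ∈ R) (hf : f ∈ R) (hf' : f' ∈ R)
    (hfe : f ≠ e) (hf'e : f' ≠ e) (hff' : f ≠ f')
    (h1 : HalfWastefulPair R A e f) (h2 : HalfWastefulPair R A e f') : False := by
  obtain ⟨ge, hge, -, -, gef, hgef, hoe, -, hme, hmf⟩ := h1
  obtain ⟨-, -, -, -, gef', hgef', -, -, hme', hmf'⟩ := h2
  have d1 : ge ≠ gef := by
    rintro rfl; exact hoe.2 f hf hfe hmf
  have d2 : ge ≠ gef' := by
    rintro rfl; exact hoe.2 f' hf' hf'e hmf'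
  have d3 : gef ≠ gef' := by
    rintro rfl
    obtain ⟨m1, hm1z, hm1⟩ := hme
    obtain ⟨m2, hm2z, hm2⟩ := hmf
    obtain ⟨m3, hm3z, hm3⟩ := hmf'
    have h12 : m1 ≠ m2 := by rintro rfl; exact hR e he f hf (Ne.symm hfe) ⟨m1, hm1, hm2⟩
    have h13 : m1 ≠ m3 := by rintro rfl; exact hR e he f' hf' (Ne.symm hf'e) ⟨m1, hm1, hm3⟩
    have h23 : m2 ≠ m3 := by rintro rfl; exact hR f hf f' hf' hff' ⟨m2, hm2, hm3⟩
    exact not_three_mem h12 h13 h23 hm1z hm2z hm3z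
  obtain ⟨u1, hu1g, hu1⟩ := hoe.1
  obtain ⟨u2, hu2g, hu2⟩ := hme
  obtain ⟨u3, hu3g, hu3⟩ := hme'
  have h12 : u1 ≠ u2 := by rintro rfl; exact hAm ge hge gef hgef d1 u1 hu1g hu2g
  have h13 : u1 ≠ u3 := by rintro rfl; exact hAm ge hge gef' hgef' d2 u1 hu1g hu3g
  have h23 : u2 ≠ u3 := by rintro rfl; exact hAm gef hgef gef' hgef' d3 u2 hu2g hu3g
  exact not_three_mem h12 h13 h23 hu1 hu2 hu3

lemma aug {V : Type*} [DecidableEq V] {n : ℕ} {F : Fin n → Finset (Sym2 V)}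
    {I : Finset (Fin n)} {c : Fin n → Sym2 V}
    (hc : ∀ i ∈ I, c i ∈ F i)
    (hdisj : ∀ i ∈ I, ∀ j ∈ I, i ≠ j → ∀ v, v ∈ c i → v ∉ c j)
    (hmax : ∀ (J : Finset (Fin n)) (d : Fin n → Sym2 V),
      (∀ i ∈ J, d i ∈ F i) →
      (∀ i ∈ J, ∀ j ∈ J, i ≠ j → ∀ v, v ∈ d i → v ∉ d j) →
      J.card ≤ I.card)
    (S : Finset (Fin n)) (hS : S ⊆ I)
    (T : Finset (Fin n)) (hTI : ∀ i ∈ T, i ∉ I)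
    (dT : Fin n → Sym2 V) (hdT : ∀ i ∈ T, dT i ∈ F i)
    (hTT : ∀ i ∈ T, ∀ j ∈ T, i ≠ j → ¬ Meets (dT i) (dT j))
    (hTold : ∀ i ∈ T, ∀ j ∈ I, j ∉ S → ¬ Meets (dT i) (c j))
    (hcard : S.card < T.card) : False := by
  classical
  set J : Finset (Fin n) := (I \ S) ∪ T with hJ
  set d : Fin n → Sym2 V := fun j => if j ∈ T then dT j else c j with hd
  have hdisjJ : Disjoint (I \ S) T := by
    rw [Finset.disjoint_left]
    intro i hi hiT
    exact hTI i hiT (Finset.mem_sdiff.1 hi).1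
  have hJcard : J.card = I.card - S.card + T.card := by
    rw [hJ, Finset.card_union_of_disjoint hdisjJ, Finset.card_sdiff_of_subset hS]
  have h1 : ∀ i ∈ J, d i ∈ F i := by
    intro i hi
    rw [hd]
    by_cases hiT : i ∈ T
    · simp [hiT]; exact hdT i hiT
    · simp [hiT]
      rcases Finset.mem_union.1 hi with hi' | hi'
      · exact hc i (Finset.mem_sdiff.1 hi').1
      · exact absurd hi' hiT
  have h2 : ∀ i ∈ J, ∀ j ∈ J, i ≠ j → ∀ v, v ∈ d i → v ∉ d j := by
    intro i hi j hj hij v hvi hvj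
    rcases Finset.mem_union.1 hi with hi' | hi' <;> rcases Finset.mem_union.1 hj with hj' | hj'
    · have hiI := Finset.mem_sdiff.1 hi'
      have hjI := Finset.mem_sdiff.1 hj'
      have : d i = c i := by rw [hd]; exact if_neg (fun h => hTI i h hiI.1)
      have hdj : d j = c j := by rw [hd]; exact if_neg (fun h => hTI j h hjI.1)
      exact hdisj i hiI.1 j hjI.1 hij v (this ▸ hvi) (hdj ▸ hvj)
    · have hiI := Finset.mem_sdiff.1 hi'
      have hdi : d i = c i := by rw [hd]; exact if_neg (fun h => hTI i h hiI.1)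
      have hdj : d j = dT j := by rw [hd]; exact if_pos hj'
      exact hTold j hj' i hiI.1 hiI.2 ⟨v, hdj ▸ hvj, hdi ▸ hvi⟩
    · have hjI := Finset.mem_sdiff.1 hj'
      have hdj : d j = c j := by rw [hd]; exact if_neg (fun h => hTI j h hjI.1)
      have hdi : d i = dT i := by rw [hd]; exact if_pos hi'
      exact hTold i hi' j hjI.1 hjI.2 ⟨v, hdi ▸ hvi, hdj ▸ hvj⟩
    · have hdi : d i = dT i := by rw [hd]; exact if_pos hi'
      have hdj : d j = dT j := by rw [hd]; exact if_pos hj'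
      exact hTT i hi' j hj' hij ⟨v, hdi ▸ hvi, hdj ▸ hvj⟩
  have := hmax J d h1 h2
  rw [hJcard] at this
  have hSI : S.card ≤ I.card := Finset.card_le_card hS
  omega

lemma no_c3 {V : Type*} {G : SimpleGraph V}
    (hfree : ∀ (v : V) (w : SimpleGraph.Walk G v v), w.IsCycle → w.length ≠ 3 ∧ w.length ≠ 5)
    {a b c : V} (h1 : G.Adj a b) (h2 : G.Adj b c) (h3 : G.Adj c a) : False := by
  have hbc : b ≠ c := h2.ne
  have hab : a ≠ b := h1.ne
  have hca : c ≠ a := h3.ne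
  let w : G.Walk a a := SimpleGraph.Walk.cons h1 (SimpleGraph.Walk.cons h2 (SimpleGraph.Walk.cons h3 SimpleGraph.Walk.nil))
  have hcyc : w.IsCycle := by
    constructor
    · constructor
      · simp [w, SimpleGraph.Walk.isTrail_def, Sym2.eq_iff]
        tauto
      · simp [w]
    · simp [w]
      tauto
  exact (hfree a w hcyc).1 (by simp [w])

lemma no_c5 {V : Type*} {G : SimpleGraph V}
    (hfree : ∀ (v : V) (w : SimpleGraph.Walk G v v), w.IsCycle → w.length ≠ 3 ∧ w.length ≠ 5)
    {a b c d e : V} (h1 : G.Adj a b) (h2 : G.Adj b c) (h3 : G.Adj c d)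
    (h4 : G.Adj d e) (h5 : G.Adj e a)
    (hac : a ≠ c) (had : a ≠ d) (hbd : b ≠ d) (hbe : b ≠ e) (hce : c ≠ e) : False := by
  have := h1.ne; have := h2.ne; have := h3.ne; have := h4.ne; have := h5.ne
  let w : G.Walk a a := SimpleGraph.Walk.cons h1 (SimpleGraph.Walk.cons h2 (SimpleGraph.Walk.cons h3 (SimpleGraph.Walk.cons h4 (SimpleGraph.Walk.cons h5 SimpleGraph.Walk.nil))))
  have hcyc : w.IsCycle := by
    constructor
    · constructor
      · simp [w, SimpleGraph.Walk.isTrail_def, Sym2.eq_iff]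
        push_neg
        refine ⟨⟨?_,?_,?_,?_⟩,⟨?_,?_,?_⟩,⟨?_,?_⟩,?_⟩ <;> tauto
      · simp [w]
    · simp [w]
      push_neg
      refine ⟨⟨?_,?_,?_,?_⟩,⟨?_,?_,?_⟩,⟨?_,?_⟩,?_⟩ <;> tauto
  exact (hfree a w hcyc).2 (by simp [w])
lemma sym2_mem {V : Type*} (z : Sym2 V) : ∃ v, v ∈ z := by
  induction z using Sym2.ind with
  | _ x y => exact ⟨x, Sym2.mem_mk_left x y⟩

lemma key {V : Type*} [DecidableEq V] {G : SimpleGraph V} {n : ℕ}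
    (hfree : ∀ (v : V) (w : SimpleGraph.Walk G v v), w.IsCycle → w.length ≠ 3 ∧ w.length ≠ 5)
    {F : Fin n → Finset (Sym2 V)} {I : Finset (Fin n)} {c : Fin n → Sym2 V}
    (hedges : ∀ i, ∀ e ∈ F i, e ∈ G.edgeSet)
    (hmatch : ∀ i, ∀ e ∈ F i, ∀ f ∈ F i, e ≠ f → ∀ v, v ∈ e → v ∉ f)
    (hc : ∀ i ∈ I, c i ∈ F i)
    (hdisj : ∀ i ∈ I, ∀ j ∈ I, i ≠ j → ∀ v, v ∈ c i → v ∉ c j)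
    (hmax : ∀ (J : Finset (Fin n)) (d : Fin n → Sym2 V),
      (∀ i ∈ J, d i ∈ F i) →
      (∀ i ∈ J, ∀ j ∈ J, i ≠ j → ∀ v, v ∈ d i → v ∉ d j) →
      J.card ≤ I.card)
    {e f : Sym2 V} (he : e ∈ I.image c) (hf : f ∈ I.image c) (hef : e ≠ f)
    {i1 i2 i3 : Fin n} (hi1 : i1 ∉ I) (hi2 : i2 ∉ I) (hi3 : i3 ∉ I)
    (h12 : i1 ≠ i2) (h13 : i1 ≠ i3) (h23 : i2 ≠ i3)
    (h1 : HalfWasteful (I.image c) (F i1) e)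
    (h2 : HalfWasteful (I.image c) (F i2) f)
    (h3 : HalfWastefulPair (I.image c) (F i3) e f) : False := by
  classical
  have hinj : ∀ i ∈ I, ∀ j ∈ I, c i = c j → i = j := by
    intro i hi j hj hcc
    by_contra hne
    obtain ⟨v, hv⟩ := sym2_mem (c i)
    exact hdisj i hi j hj hne v hv (hcc ▸ hv)
  have hRmatch : ∀ g ∈ I.image c, ∀ g' ∈ I.image c, g ≠ g' → ¬Meets g g' := by
    intro g hg g' hg' hne hm
    obtain ⟨i, hi, rfl⟩ := Finset.mem_image.1 hg
    obtain ⟨j, hj, rfl⟩ := Finset.mem_image.1 hg'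
    obtain ⟨v, hv1, hv2⟩ := hm
    exact hdisj i hi j hj (fun hh => hne (hh ▸ rfl)) v hv1 hv2
  have hRedge : ∀ g ∈ I.image c, g ∈ G.edgeSet := by
    intro g hg
    obtain ⟨i, hi, rfl⟩ := Finset.mem_image.1 hg
    exact hedges i _ (hc i hi)
  obtain ⟨v3, x3, p, r, w3, y3, heq, hfq, hv3p, hw3r, hpr, hge3, hgf3, hgef3, hv3x3, hw3y3,
    hmo3e, hmo3f, hx3un, hy3un⟩ :=
    pair_data (hedges i3) (hmatch i3) hRmatch hRedge he hf hef h3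
  obtain ⟨f1, hf1R, hf1e, hp1⟩ := h1
  obtain ⟨a1, x1, p1, r1, b1, y1, heq1, -, ha1p1, -, -, hge1, -, -, ha1x1, -, hmo1e, -, hx1un, -⟩ :=
    pair_data (hedges i1) (hmatch i1) hRmatch hRedge he hf1R (Ne.symm hf1e) hp1
  obtain ⟨f2, hf2R, hf2f, hp2⟩ := h2
  obtain ⟨b2, y2, p2, r2, bb2, yy2, hfq2, -, hb2p2, -, -, hgf2, -, -, hb2y2, -, hmo2f, -, hy2un, -⟩ :=
    pair_data (hedges i2) (hmatch i2) hRmatch hRedge hf hf2R (Ne.symm hf2f) hp2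
  -- memberships
  have hv3e : v3 ∈ e := by rw [heq]; exact Sym2.mem_mk_left _ _
  have hpe : p ∈ e := by rw [heq]; exact Sym2.mem_mk_right _ _
  have hw3f : w3 ∈ f := by rw [hfq]; exact Sym2.mem_mk_left _ _
  have hrf : r ∈ f := by rw [hfq]; exact Sym2.mem_mk_right _ _
  have ha1e : a1 ∈ e := by rw [heq1]; exact Sym2.mem_mk_left _ _
  have hb2f : b2 ∈ f := by rw [hfq2]; exact Sym2.mem_mk_left _ _
  -- adjacencies
  have hadj_e : G.Adj v3 p := by
    have := hRedge e he; rw [heq] at this; exact (SimpleGraph.mem_edgeSet G).mp this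
  have hadj_f : G.Adj w3 r := by
    have := hRedge f hf; rw [hfq] at this; exact (SimpleGraph.mem_edgeSet G).mp this
  have hadj_pr : G.Adj p r := (SimpleGraph.mem_edgeSet G).mp (hedges i3 _ hgef3)
  have hadj_v3x3 : G.Adj v3 x3 := (SimpleGraph.mem_edgeSet G).mp (hedges i3 _ hge3)
  have hadj_w3y3 : G.Adj w3 y3 := (SimpleGraph.mem_edgeSet G).mp (hedges i3 _ hgf3)
  have hadj_a1x1 : G.Adj a1 x1 := (SimpleGraph.mem_edgeSet G).mp (hedges i1 _ hge1)
  have hadj_b2y2 : G.Adj b2 y2 := (SimpleGraph.mem_edgeSet G).mp (hedges i2 _ hgf2)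
  -- e and f do not share vertices
  have hefv : ∀ v, v ∈ e → v ∈ f → False := fun v hv1 hv2 => hRmatch e he f hf hef ⟨v, hv1, hv2⟩
  by_cases hA : a1 = v3
  · by_cases hB : b2 = w3
    · -- Case C : augment with three edges
      have hx1y2 : x1 ≠ y2 := by
        rintro rfl
        refine no_c5 hfree (hA ▸ hadj_a1x1) (hB ▸ hadj_b2y2).symm hadj_f hadj_pr.symm
          hadj_e.symm ?_ ?_ ?_ ?_ ?_
        · exact fun hh => hefv v3 hv3e (hh ▸ hw3f)
        · exact fun hh => hefv v3 hv3e (hh ▸ hrf)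
        · exact fun hh => hx1un f hf (hh ▸ hrf)
        · exact fun hh => hx1un e he (hh ▸ hpe)
        · exact fun hh => hefv p hpe (hh.symm ▸ hw3f)
      obtain ⟨a, haI, hca⟩ := Finset.mem_image.1 he
      obtain ⟨b, hbI, hcb⟩ := Finset.mem_image.1 hf
      have hab : a ≠ b := fun hh => hef ((hca.symm.trans (hh ▸ hcb)))
      have M12 : ¬ Meets s(a1, x1) s(b2, y2) := by
        intro hm
        rcases meets_elim hm with hh | hh | hh | hh
        · exact hefv a1 ha1e (hh ▸ hb2f)
        · exact hy2un e he (hh ▸ ha1e)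
        · exact hx1un f hf (hh ▸ hb2f)
        · exact hx1y2 hh
      have M13 : ¬ Meets s(a1, x1) s(p, r) := by
        intro hm
        rcases meets_elim hm with hh | hh | hh | hh
        · exact hv3p (hA ▸ hh)
        · exact hefv a1 ha1e (hh ▸ hrf)
        · exact hx1un e he (hh ▸ hpe)
        · exact hx1un f hf (hh ▸ hrf)
      have M23 : ¬ Meets s(b2, y2) s(p, r) := by
        intro hm
        rcases meets_elim hm with hh | hh | hh | hh
        · exact hefv p hpe (hh.symm ▸ hb2f)
        · exact hw3r (hB ▸ hh)
        · exact hy2un e he (hh ▸ hpe)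
        · exact hy2un f hf (hh ▸ hrf)
      set dT : Fin n → Sym2 V :=
        fun i => if i = i1 then s(a1, x1) else if i = i2 then s(b2, y2) else s(p, r) with hdT
      have hd1 : dT i1 = s(a1, x1) := by simp [hdT]
      have hd2 : dT i2 = s(b2, y2) := by simp [hdT, Ne.symm h12]
      have hd3 : dT i3 = s(p, r) := by simp [hdT, Ne.symm h13, Ne.symm h23]
      have memT : ∀ k ∈ ({i1, i2, i3} : Finset (Fin n)), k = i1 ∨ k = i2 ∨ k = i3 := by
        intro k hk
        rcases Finset.mem_insert.1 hk with hk' | hk'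
        · exact Or.inl hk'
        rcases Finset.mem_insert.1 hk' with hk'' | hk''
        · exact Or.inr (Or.inl hk'')
        · exact Or.inr (Or.inr (Finset.mem_singleton.1 hk''))
      refine aug hc hdisj hmax {a, b} ?_ {i1, i2, i3} ?_ dT ?_ ?_ ?_ ?_
      · intro x hx
        rcases Finset.mem_insert.1 hx with rfl | hx
        · exact haI
        · exact Finset.mem_singleton.1 hx ▸ hbI
      · intro i hi
        rcases memT i hi with hh | hh | hh <;> subst hh
        · exact hi1
        · exact hi2
        · exact hi3
      · intro i hi
        rcases memT i hi with hh | hh | hh <;> subst hh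
        · rw [hd1]; exact hge1
        · rw [hd2]; exact hgf2
        · rw [hd3]; exact hgef3
      · intro i hiT j hjT hij hm
        rcases memT i hiT with hh | hh | hh <;> subst hh <;>
          rcases memT j hjT with hh | hh | hh <;> first | (exact hij hh.symm ▸ hij rfl) | subst hh
        · exact hij rfl
        · rw [hd1, hd2] at hm; exact M12 hm
        · rw [hd1, hd3] at hm; exact M13 hm
        · rw [hd2, hd1] at hm; exact M12 (meets_symm hm)
        · exact hij rfl
        · rw [hd2, hd3] at hm; exact M23 hm
        · rw [hd3, hd1] at hm; exact M13 (meets_symm hm)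
        · rw [hd3, hd2] at hm; exact M23 (meets_symm hm)
        · exact hij rfl
      · intro i hiT j hjI hjS
        have hcje : c j ≠ e := by
          intro hh
          exact hjS (Finset.mem_insert.2 (Or.inl (hinj j hjI a haI (hh.trans hca.symm))))
        have hcjf : c j ≠ f := by
          intro hh
          exact hjS (Finset.mem_insert.2 (Or.inr (Finset.mem_singleton.2
            (hinj j hjI b hbI (hh.trans hcb.symm)))))
        have hcjR : c j ∈ I.image c := Finset.mem_image.2 ⟨j, hjI, rfl⟩
        rcases memT i hiT with hh | hh | hh <;> subst hh
        · rw [hd1]; exact hmo1e.2 (c j) hcjR hcje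
        · rw [hd2]; exact hmo2f.2 (c j) hcjR hcjf
        · rw [hd3]
          rintro ⟨v, hvpr, hvc⟩
          rw [Sym2.mem_iff] at hvpr
          rcases hvpr with rfl | rfl
          · exact hRmatch e he (c j) hcjR (Ne.symm hcje) ⟨v, hpe, hvc⟩
          · exact hRmatch f hf (c j) hcjR (Ne.symm hcjf) ⟨v, hrf, hvc⟩
      · rw [Finset.card_insert_of_notMem (by simp [hab]),
          Finset.card_insert_of_notMem (by simp [h12, h13]),
          Finset.card_insert_of_notMem (by simp [h23])]
        simp
    · -- Case B : b2 ≠ w3, augment at f with i2, i3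
      have hb2r : b2 = r := by
        have := hb2f
        rw [hfq, Sym2.mem_iff] at this
        tauto
      have hy23 : y2 ≠ y3 := by
        rintro rfl
        exact no_c3 hfree hadj_f (hb2r ▸ hadj_b2y2) hadj_w3y3.symm
      obtain ⟨b, hbI, hcb⟩ := Finset.mem_image.1 hf
      have M : ¬ Meets s(b2, y2) s(w3, y3) := by
        intro hm
        rcases meets_elim hm with hh | hh | hh | hh
        · exact hB hh
        · exact hy3un f hf (hh ▸ hb2f)
        · exact hy2un f hf (hh ▸ hw3f)
        · exact hy23 hh
      set dT : Fin n → Sym2 V := fun i => if i = i2 then s(b2, y2) else s(w3, y3) with hdT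
      have hd2 : dT i2 = s(b2, y2) := by simp [hdT]
      have hd3 : dT i3 = s(w3, y3) := by simp [hdT, Ne.symm h23]
      have memT : ∀ k ∈ ({i2, i3} : Finset (Fin n)), k = i2 ∨ k = i3 := by
        intro k hk
        rcases Finset.mem_insert.1 hk with hk' | hk'
        · exact Or.inl hk'
        · exact Or.inr (Finset.mem_singleton.1 hk')
      refine aug hc hdisj hmax {b} (Finset.singleton_subset_iff.2 hbI) {i2, i3} ?_ dT ?_ ?_ ?_ ?_
      · intro i hi
        rcases memT i hi with hh | hh <;> subst hh
        · exact hi2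
        · exact hi3
      · intro i hi
        rcases memT i hi with hh | hh <;> subst hh
        · rw [hd2]; exact hgf2
        · rw [hd3]; exact hgf3
      · intro i hiT j hjT hij hm
        rcases memT i hiT with hh | hh <;> subst hh <;> rcases memT j hjT with hh | hh <;> subst hh
        · exact hij rfl
        · rw [hd2, hd3] at hm; exact M hm
        · rw [hd3, hd2] at hm; exact M (meets_symm hm)
        · exact hij rfl
      · intro i hiT j hjI hjS
        have hcjf : c j ≠ f := by
          intro hh
          exact hjS (Finset.mem_singleton.2 (hinj j hjI b hbI (hh.trans hcb.symm)))
        have hcjR : c j ∈ I.image c := Finset.mem_image.2 ⟨j, hjI, rfl⟩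
        rcases memT i hiT with hh | hh <;> subst hh
        · rw [hd2]; exact hmo2f.2 (c j) hcjR hcjf
        · rw [hd3]; exact hmo3f.2 (c j) hcjR hcjf
      · rw [Finset.card_insert_of_notMem (by simp [h23])]
        simp
  · -- Case A : a1 ≠ v3, augment at e with i1, i3
    have ha1p : a1 = p := by
      have := ha1e
      rw [heq, Sym2.mem_iff] at this
      tauto
    have hx13 : x1 ≠ x3 := by
      rintro rfl
      exact no_c3 hfree hadj_e (ha1p ▸ hadj_a1x1) hadj_v3x3.symm
    obtain ⟨a, haI, hca⟩ := Finset.mem_image.1 he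
    have M : ¬ Meets s(a1, x1) s(v3, x3) := by
      intro hm
      rcases meets_elim hm with hh | hh | hh | hh
      · exact hA hh
      · exact hx3un e he (hh ▸ ha1e)
      · exact hx1un e he (hh ▸ hv3e)
      · exact hx13 hh
    set dT : Fin n → Sym2 V := fun i => if i = i1 then s(a1, x1) else s(v3, x3) with hdT
    have hd1 : dT i1 = s(a1, x1) := by simp [hdT]
    have hd3 : dT i3 = s(v3, x3) := by simp [hdT, Ne.symm h13]
    have memT : ∀ k ∈ ({i1, i3} : Finset (Fin n)), k = i1 ∨ k = i3 := by
      intro k hk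
      rcases Finset.mem_insert.1 hk with hk' | hk'
      · exact Or.inl hk'
      · exact Or.inr (Finset.mem_singleton.1 hk')
    refine aug hc hdisj hmax {a} (Finset.singleton_subset_iff.2 haI) {i1, i3} ?_ dT ?_ ?_ ?_ ?_
    · intro i hi
      rcases memT i hi with hh | hh <;> subst hh
      · exact hi1
      · exact hi3
    · intro i hi
      rcases memT i hi with hh | hh <;> subst hh
      · rw [hd1]; exact hge1
      · rw [hd3]; exact hge3
    · intro i hiT j hjT hij hm
      rcases memT i hiT with hh | hh <;> subst hh <;> rcases memT j hjT with hh | hh <;> subst hh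
      · exact hij rfl
      · rw [hd1, hd3] at hm; exact M hm
      · rw [hd3, hd1] at hm; exact M (meets_symm hm)
      · exact hij rfl
    · intro i hiT j hjI hjS
      have hcje : c j ≠ e := by
        intro hh
        exact hjS (Finset.mem_singleton.2 (hinj j hjI a haI (hh.trans hca.symm)))
      have hcjR : c j ∈ I.image c := Finset.mem_image.2 ⟨j, hjI, rfl⟩
      rcases memT i hiT with hh | hh <;> subst hh
      · rw [hd1]; exact hmo1e.2 (c j) hcjR hcje
      · rw [hd3]; exact hmo3e.2 (c j) hcjR hcje
    · rw [Finset.card_insert_of_notMem (by simp [h13])]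
      simp
lemma pair_symm {V : Type*} {R A : Finset (Sym2 V)} {e f : Sym2 V}
    (h : HalfWastefulPair R A e f) : HalfWastefulPair R A f e := by
  obtain ⟨ge, hge, gf, hgf, gef, hgef, hoe, hof, hme, hmf⟩ := h
  exact ⟨gf, hgf, ge, hge, gef, hgef, hof, hoe, hmf, hme⟩

/-- In a graph with no 3-cycle and no 5-cycle, with `F₁, …, Fₙ`
matchings of size `n` and `R = I.image c` a maximum-size rainbow matching of size
`q = |I|`, we have `Σ_{e ∈ R} |HW(e)| ≤ 2q`, where `HW(e)` is the set of unrepresented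
matchings `Fᵢ` for which `e` is half-`Fᵢ`-wasteful. -/
theorem stmt_12 {V : Type*} [DecidableEq V] (G : SimpleGraph V) (n : ℕ)
    (hfree : ∀ (v : V) (w : G.Walk v v), w.IsCycle → w.length ≠ 3 ∧ w.length ≠ 5)
    (F : Fin n → Finset (Sym2 V))
    (hedges : ∀ i, ∀ e ∈ F i, e ∈ G.edgeSet)
    (hmatch : ∀ i, ∀ e ∈ F i, ∀ f ∈ F i, e ≠ f → ∀ v, v ∈ e → v ∉ f)
    (hsize : ∀ i, (F i).card = n)
    (I : Finset (Fin n)) (c : Fin n → Sym2 V)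
    (hc : ∀ i ∈ I, c i ∈ F i)
    (hdisj : ∀ i ∈ I, ∀ j ∈ I, i ≠ j → ∀ v, v ∈ c i → v ∉ c j)
    (hmax : ∀ (J : Finset (Fin n)) (d : Fin n → Sym2 V),
      (∀ i ∈ J, d i ∈ F i) →
      (∀ i ∈ J, ∀ j ∈ J, i ≠ j → ∀ v, v ∈ d i → v ∉ d j) →
      J.card ≤ I.card) :
    ∑ e ∈ I.image c, hwDeg F I (I.image c) e ≤ 2 * I.card := by
  classical
  have hinj : ∀ i ∈ I, ∀ j ∈ I, c i = c j → i = j := by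
    intro i hi j hj hcc
    by_contra hne
    obtain ⟨v, hv⟩ := sym2_mem (c i)
    exact hdisj i hi j hj hne v hv (hcc ▸ hv)
  have hRmatch : ∀ g ∈ I.image c, ∀ g' ∈ I.image c, g ≠ g' → ¬Meets g g' := by
    intro g hg g' hg' hne hm
    obtain ⟨i, hi, rfl⟩ := Finset.mem_image.1 hg
    obtain ⟨j, hj, rfl⟩ := Finset.mem_image.1 hg'
    obtain ⟨v, hv1, hv2⟩ := hm
    exact hdisj i hi j hj (fun hh => hne (hh ▸ rfl)) v hv1 hv2
  -- the set of colors for which e is half-wasteful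
  set A : Sym2 V → Finset (Fin n) :=
    fun e => {i : Fin n | i ∉ I ∧ HalfWasteful (I.image c) (F i) e}.toFinset with hA
  have hmemA : ∀ e i, i ∈ A e ↔ (i ∉ I ∧ HalfWasteful (I.image c) (F i) e) := by
    intro e i
    rw [hA]
    simp [Set.mem_toFinset]
  have hwdeg_eq : ∀ e, hwDeg F I (I.image c) e = (A e).card := by
    intro e
    rw [hA]
    exact Set.ncard_eq_toFinset_card' _
  -- partner function
  set pt : Sym2 V → Fin n → Sym2 V :=
    fun e i => if h : HalfWasteful (I.image c) (F i) e then h.choose else e with hptdef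
  have hpt : ∀ e i, HalfWasteful (I.image c) (F i) e →
      pt e i ∈ I.image c ∧ pt e i ≠ e ∧ HalfWastefulPair (I.image c) (F i) e (pt e i) := by
    intro e i h
    rw [hptdef]
    simp only [dif_pos h]
    exact ⟨h.choose_spec.1, h.choose_spec.2.1, h.choose_spec.2.2⟩
  -- (F_one): if e has ≥ 3 colors, each partner has exactly one color
  have F_one : ∀ e ∈ I.image c, 3 ≤ (A e).card → ∀ i ∈ A e, A (pt e i) = {i} := by
    intro e he h3 i hi
    obtain ⟨hiI, hiHW⟩ := (hmemA e i).1 hi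
    obtain ⟨hfR, hfe, hpair⟩ := hpt e i hiHW
    have hiAf : i ∈ A (pt e i) :=
      (hmemA _ i).2 ⟨hiI, ⟨e, he, Ne.symm hfe, pair_symm hpair⟩⟩
    refine Finset.eq_singleton_iff_unique_mem.2 ⟨hiAf, ?_⟩
    intro j hj
    by_contra hji
    obtain ⟨hjI, hjHW⟩ := (hmemA _ j).1 hj
    have hnss : ¬ (A e ⊆ {i, j}) := by
      intro hsub
      have h1 := Finset.card_le_card hsub
      have h2 : ({i, j} : Finset (Fin n)).card ≤ 2 := Finset.card_insert_le _ _ |>.trans (by simp)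
      omega
    obtain ⟨i1, hi1Ae, hi1not⟩ := Finset.not_subset.1 hnss
    obtain ⟨hi1I, hi1HW⟩ := (hmemA e i1).1 hi1Ae
    have hi1i : i1 ≠ i := fun hh => hi1not (by simp [hh])
    have hi1j : i1 ≠ j := fun hh => hi1not (by simp [hh])
    exact key hfree hedges hmatch hc hdisj hmax he hfR (Ne.symm hfe)
      hi1I hjI hiI hi1j hi1i hji hi1HW hjHW hpair
  -- (F_inj): pt e is injective on A e when e has ≥ 3 colors
  have F_inj : ∀ e ∈ I.image c, 3 ≤ (A e).card → Set.InjOn (pt e) (A e) := by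
    intro e he h3 i hi j hj hij
    obtain ⟨hjI, hjHW⟩ := (hmemA e j).1 hj
    have h1 := F_one e he h3 i hi
    obtain ⟨hfR, hfe, hpair⟩ := hpt e j hjHW
    have hjAf : j ∈ A (pt e j) :=
      (hmemA _ j).2 ⟨hjI, ⟨e, he, Ne.symm hfe, pair_symm hpair⟩⟩
    rw [← hij, h1] at hjAf
    exact (Finset.mem_singleton.1 hjAf).symm
  set B : Finset (Sym2 V) := (I.image c).filter (fun e => 3 ≤ (A e).card) with hB
  set NN : Finset (Sym2 V) := B.biUnion (fun e => (A e).image (pt e)) with hNN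
  have hNN_elt : ∀ g ∈ NN, ∃ e ∈ B, ∃ i ∈ A e, pt e i = g := by
    intro g hg
    obtain ⟨e, heB, hg'⟩ := Finset.mem_biUnion.1 hg
    obtain ⟨i, hi, hpi⟩ := Finset.mem_image.1 hg'
    exact ⟨e, heB, i, hi, hpi⟩
  have hNsub : NN ⊆ I.image c := by
    intro g hg
    obtain ⟨e, heB, i, hi, hpi⟩ := hNN_elt g hg
    obtain ⟨-, hiHW⟩ := (hmemA e i).1 hi
    exact hpi ▸ (hpt e i hiHW).1
  have hN1 : ∀ g ∈ NN, (A g).card = 1 := by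
    intro g hg
    obtain ⟨e, heB, i, hi, hpi⟩ := hNN_elt g hg
    have heR := (Finset.mem_filter.1 heB).1
    have h3 := (Finset.mem_filter.1 heB).2
    rw [← hpi, F_one e heR h3 i hi]
    simp
  have hBN_disj : Disjoint B NN := by
    rw [Finset.disjoint_left]
    intro g hgB hgN
    have := hN1 g hgN
    have := (Finset.mem_filter.1 hgB).2
    omega
  have hNNcard : NN.card = ∑ e ∈ B, (A e).card := by
    rw [hNN, Finset.card_biUnion]
    · refine Finset.sum_congr rfl ?_
      intro e heB
      exact Finset.card_image_of_injOn
        (F_inj e (Finset.mem_filter.1 heB).1 (Finset.mem_filter.1 heB).2)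
    · intro e heB e' he'B hee'
      rw [Function.onFun, Finset.disjoint_left]
      intro g hg hg'
      obtain ⟨i, hi, hpi⟩ := Finset.mem_image.1 hg
      obtain ⟨i', hi', hpi'⟩ := Finset.mem_image.1 hg'
      have heR := (Finset.mem_filter.1 heB).1
      have he'R := (Finset.mem_filter.1 he'B).1
      have h3 := (Finset.mem_filter.1 heB).2
      have h3' := (Finset.mem_filter.1 he'B).2
      have hAg : A g = {i} := by rw [← hpi]; exact F_one e heR h3 i hi
      have hAg' : A g = {i'} := by rw [← hpi']; exact F_one e' he'R h3' i' hi'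
      have hii' : i = i' := by
        have := hAg ▸ hAg'
        exact Finset.singleton_inj.1 (hAg'.symm.trans hAg) |>.symm
      subst hii'
      obtain ⟨hiI, hiHW⟩ := (hmemA e i).1 hi
      obtain ⟨hiI', hiHW'⟩ := (hmemA e' i).1 hi'
      obtain ⟨hfR, hfe, hpair⟩ := hpt e i hiHW
      obtain ⟨hfR', hfe', hpair'⟩ := hpt e' i hiHW'
      rw [hpi] at hpair hfe
      rw [hpi'] at hpair' hfe'
      exact partner_unique (hmatch i) hRmatch (hpi ▸ hfR) heR he'R
        (Ne.symm hfe) (Ne.symm hfe') hee' (pair_symm hpair) (pair_symm hpair')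
  -- assemble the count
  have hBsub : B ⊆ I.image c := Finset.filter_subset _ _
  have hBNsub : B ∪ NN ⊆ I.image c := Finset.union_subset hBsub hNsub
  set Rest : Finset (Sym2 V) := (I.image c) \ (B ∪ NN) with hRest
  have hsplit : ∑ e ∈ Rest, (A e).card + ∑ e ∈ B ∪ NN, (A e).card
      = ∑ e ∈ I.image c, (A e).card := Finset.sum_sdiff hBNsub
  have hsumBN : ∑ e ∈ B ∪ NN, (A e).card = ∑ e ∈ B, (A e).card + ∑ e ∈ NN, (A e).card :=
    Finset.sum_union hBN_disj
  have hsumN : ∑ e ∈ NN, (A e).card = NN.card := by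
    rw [Finset.card_eq_sum_ones]
    exact Finset.sum_congr rfl (fun g hg => hN1 g hg)
  have hsumRest : ∑ e ∈ Rest, (A e).card ≤ 2 * Rest.card := by
    rw [mul_comm]
    refine (Finset.sum_le_card_nsmul Rest _ 2 ?_).trans (by simp)
    intro e heRest
    have heR := (Finset.mem_sdiff.1 heRest).1
    have heNB := (Finset.mem_sdiff.1 heRest).2
    have : e ∉ B := fun hh => heNB (Finset.mem_union.2 (Or.inl hh))
    rw [hB, Finset.mem_filter] at this
    push_neg at this
    have := this heR
    omega
  have hcardsplit : Rest.card + (B.card + NN.card) = I.card := by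
    have h1 : (B ∪ NN).card = B.card + NN.card := Finset.card_union_of_disjoint hBN_disj
    have h2 : Rest.card = (I.image c).card - (B ∪ NN).card := by
      rw [hRest, Finset.card_sdiff_of_subset hBNsub]
    have h3 : (B ∪ NN).card ≤ (I.image c).card := Finset.card_le_card hBNsub
    have h4 : (I.image c).card = I.card := Finset.card_image_of_injOn hinj
    omega
  calc ∑ e ∈ I.image c, hwDeg F I (I.image c) e
      = ∑ e ∈ I.image c, (A e).card := Finset.sum_congr rfl (fun e _ => hwdeg_eq e)
    _ = ∑ e ∈ Rest, (A e).card + (∑ e ∈ B, (A e).card + ∑ e ∈ NN, (A e).card) := by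
        rw [← hsplit, hsumBN]
    _ = ∑ e ∈ Rest, (A e).card + (NN.card + NN.card) := by rw [← hNNcard, hsumN]
    _ ≤ 2 * Rest.card + (NN.card + NN.card) := by omega
    _ ≤ 2 * I.card := by omega
end

section
/- Let G be a graph with no cycle of length 3 and no cycle of length 5, let F_1, …, F_n be matchings of size n in G, and let R be a rainbow matching of maximum size. Suppose G₁ ≠ G₂ are two unrepresented matchings and e, f ∈ R are such that the pair {e, f} is half-G₁-wasteful and half-G₂-wasteful. Then the number of unrepresented matchings G for which e is half-G-wasteful is exactly 2. -/
open SimpleGraph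

section Helpers
variable {V : Type*}

lemma sym2_exists_mem (z : Sym2 V) : ∃ v, v ∈ z := by
  induction z using Sym2.ind with
  | _ x y => exact ⟨x, by simp⟩

lemma adj_of_mem_edge (G : SimpleGraph V) {z : Sym2 V} {u v : V}
    (hz : z ∈ G.edgeSet) (hu : u ∈ z) (hv : v ∈ z) (huv : u ≠ v) : G.Adj u v := by
  induction z using Sym2.ind with
  | _ x y =>
    rw [Sym2.mem_iff] at hu hv
    rcases hu with rfl | rfl <;> rcases hv with rfl | rfl <;>
      first | exact absurd rfl huv | exact hz | exact (G.mem_edgeSet.mp hz).symm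

lemma sym2_pigeonhole {z : Sym2 V} {u v w : V} (hu : u ∈ z) (hv : v ∈ z) (hw : w ∈ z)
    (huv : u ≠ v) (huw : u ≠ w) (hvw : v ≠ w) : False := by
  induction z using Sym2.ind with
  | _ x y =>
    rw [Sym2.mem_iff] at hu hv hw
    rcases hu with rfl | rfl <;> rcases hv with rfl | rfl <;> rcases hw with rfl | rfl <;>
      simp_all

lemma sym2_eq_of_mem {z : Sym2 V} {u v : V} (hz : ¬ z.IsDiag) (hu : u ∈ z) (hv : v ∈ z)
    (huv : u ≠ v) : z = s(u, v) := by
  induction z using Sym2.ind with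
  | _ x y =>
    rw [Sym2.mem_iff] at hu hv
    rw [Sym2.isDiag_iff_proj_eq] at hz
    rcases hu with rfl | rfl <;> rcases hv with rfl | rfl <;> simp_all [Sym2.eq_swap]

lemma no_C3 (G : SimpleGraph V)
    (hfree : ∀ (v : V) (w : G.Walk v v), w.IsCycle → w.length ≠ 3 ∧ w.length ≠ 5)
    {a b c : V} (hab : G.Adj a b) (hbc : G.Adj b c) (hca : G.Adj c a) : False := by
  have hac : a ≠ c := fun h => (h ▸ hca).ne rfl
  let w : G.Walk a a := .cons hab (.cons hbc (.cons hca .nil))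
  refine (hfree a w ?_).1 rfl
  rw [SimpleGraph.Walk.isCycle_def]
  refine ⟨?_, by simp [w], ?_⟩
  · rw [SimpleGraph.Walk.isTrail_def]
    simp [w, List.nodup_cons, Sym2.eq_iff, hab.ne, hbc.ne, hac, hab.ne', hbc.ne']
  · simp [w, List.nodup_cons, hab.ne', hbc.ne, hbc.ne', hac, hac.symm]

lemma no_C5 (G : SimpleGraph V)
    (hfree : ∀ (v : V) (w : G.Walk v v), w.IsCycle → w.length ≠ 3 ∧ w.length ≠ 5)
    {a b c d x : V} (hab : G.Adj a b) (hbc : G.Adj b c) (hcd : G.Adj c d)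
    (hdx : G.Adj d x) (hxa : G.Adj x a)
    (hac : a ≠ c) (had : a ≠ d) (hbd : b ≠ d) (hbx : b ≠ x) (hcx : c ≠ x) : False := by
  let w : G.Walk a a := .cons hab (.cons hbc (.cons hcd (.cons hdx (.cons hxa .nil))))
  refine (hfree a w ?_).2 rfl
  rw [SimpleGraph.Walk.isCycle_def]
  refine ⟨?_, by simp [w], ?_⟩
  · rw [SimpleGraph.Walk.isTrail_def]
    simp [w, List.nodup_cons, Sym2.eq_iff, hab.ne, hbc.ne, hcd.ne, hdx.ne, hxa.ne,
      hab.ne', hbc.ne', hcd.ne', hdx.ne', hxa.ne', hac, had, hbd, hbx, hcx]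
    aesop
  · simp [w, List.nodup_cons, hab.ne', hbc.ne, hbc.ne', hac, had, hbd, hbx, hcx,
      hcd.ne, hdx.ne, hxa.ne, hxa.ne']
    aesop

end Helpers

/-- In a graph with no 3-cycle and no 5-cycle, with `F₁, …, Fₙ`
matchings of size `n` and `R = I.image c` a maximum-size rainbow matching: if two
distinct unrepresented matchings `F i₁ ≠ F i₂` (distinct members, `i₁ ≠ i₂`) are such
that the pair `{e, f}` of edges of `R` is half-wasteful for both, then the number of
unrepresented matchings `G` for which `e` is half-`G`-wasteful is exactly 2. -/
theorem stmt_13 {V : Type*} [DecidableEq V] (G : SimpleGraph V) (n : ℕ)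
    (hfree : ∀ (v : V) (w : G.Walk v v), w.IsCycle → w.length ≠ 3 ∧ w.length ≠ 5)
    (F : Fin n → Finset (Sym2 V))
    (hedges : ∀ i, ∀ e ∈ F i, e ∈ G.edgeSet)
    (hmatch : ∀ i, ∀ e ∈ F i, ∀ f ∈ F i, e ≠ f → ∀ v, v ∈ e → v ∉ f)
    (hsize : ∀ i, (F i).card = n)
    (I : Finset (Fin n)) (c : Fin n → Sym2 V)
    (hc : ∀ i ∈ I, c i ∈ F i)
    (hdisj : ∀ i ∈ I, ∀ j ∈ I, i ≠ j → ∀ v, v ∈ c i → v ∉ c j)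
    (hmax : ∀ (J : Finset (Fin n)) (d : Fin n → Sym2 V),
      (∀ i ∈ J, d i ∈ F i) →
      (∀ i ∈ J, ∀ j ∈ J, i ≠ j → ∀ v, v ∈ d i → v ∉ d j) →
      J.card ≤ I.card)
    (i₁ i₂ : Fin n) (hi₁ : i₁ ∉ I) (hi₂ : i₂ ∉ I) (hne : i₁ ≠ i₂)
    (e f : Sym2 V) (he : e ∈ I.image c) (hf : f ∈ I.image c) (hef : e ≠ f)
    (hw₁ : HalfWastefulPair (I.image c) (F i₁) e f)
    (hw₂ : HalfWastefulPair (I.image c) (F i₂) e f) :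
    hwDeg F I (I.image c) e = 2 := by
  classical
  set R : Finset (Sym2 V) := I.image c with hRdef
  -- injectivity of `c` on `I`
  have hcinj : ∀ i ∈ I, ∀ j ∈ I, c i = c j → i = j := by
    intro i hi j hj hij
    by_contra hne'
    obtain ⟨v, hv⟩ := sym2_exists_mem (c i)
    exact hdisj i hi j hj hne' v hv (hij ▸ hv)
  obtain ⟨ie, hie, hcie⟩ := Finset.mem_image.mp he
  obtain ⟨if', hif, hcif⟩ := Finset.mem_image.mp hf
  have hieif : ie ≠ if' := by
    intro h
    exact hef (by rw [← hcie, ← hcif, h])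
  have hRedge : ∀ p ∈ R, p ∈ G.edgeSet := by
    intro p hp
    obtain ⟨j, hj, rfl⟩ := Finset.mem_image.mp hp
    exact hedges j _ (hc j hj)
  have hFdiag : ∀ i, ∀ g ∈ F i, ¬ g.IsDiag :=
    fun i g hg => G.not_isDiag_of_mem_edgeSet (hedges i g hg)
  have hRdiag : ∀ p ∈ R, ¬ p.IsDiag := fun p hp => G.not_isDiag_of_mem_edgeSet (hRedge p hp)
  have hRdisj : ∀ p ∈ R, ∀ q ∈ R, p ≠ q → ∀ v, v ∈ p → v ∉ q := by
    intro p hp q hq hpq v hvp hvq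
    obtain ⟨i, hi, rfl⟩ := Finset.mem_image.mp hp
    obtain ⟨j, hj, rfl⟩ := Finset.mem_image.mp hq
    exact hdisj i hi j hj (fun h => hpq (by rw [h])) v hvp hvq
  -- the augmentation lemma
  have haug : ∀ (K T : Finset (Fin n)) (d : Fin n → Sym2 V),
      K ⊆ I → (∀ i ∈ T, i ∉ I) → (∀ i ∈ T, d i ∈ F i) →
      (∀ i ∈ T, ∀ j ∈ T, i ≠ j → ∀ v, v ∈ d i → v ∉ d j) →
      (∀ i ∈ T, ∀ j ∈ I, j ∉ K → ∀ v, v ∈ d i → v ∉ c j) →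
      T.card ≤ K.card := by
    intro K T d hK hTI hdF hdd hdc
    have hdisjIT : Disjoint (I \ K) T := by
      rw [Finset.disjoint_left]
      intro a ha hat
      exact hTI a hat (Finset.mem_sdiff.mp ha).1
    have hle := hmax ((I \ K) ∪ T) (fun i => if i ∈ T then d i else c i) ?_ ?_
    · rw [Finset.card_union_of_disjoint hdisjIT, Finset.card_sdiff_of_subset hK] at hle
      have hKI := Finset.card_le_card hK
      omega
    · intro i hi
      rcases Finset.mem_union.mp hi with h | h
      · simp only [if_neg (fun ht => hTI i ht (Finset.mem_sdiff.mp h).1)]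
        exact hc i (Finset.mem_sdiff.mp h).1
      · simp only [if_pos h]
        exact hdF i h
    · intro i hi j hj hij v hvi hvj
      by_cases hiT : i ∈ T
      · simp only [if_pos hiT] at hvi
        by_cases hjT : j ∈ T
        · simp only [if_pos hjT] at hvj
          exact hdd i hiT j hjT hij v hvi hvj
        · simp only [if_neg hjT] at hvj
          have hjI := Finset.mem_sdiff.mp ((Finset.mem_union.mp hj).resolve_right hjT)
          exact hdc i hiT j hjI.1 hjI.2 v hvi hvj
      · simp only [if_neg hiT] at hvi
        have hiI := Finset.mem_sdiff.mp ((Finset.mem_union.mp hi).resolve_right hiT)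
        by_cases hjT : j ∈ T
        · simp only [if_pos hjT] at hvj
          exact hdc j hjT i hiI.1 hiI.2 v hvj hvi
        · simp only [if_neg hjT] at hvj
          have hjI := Finset.mem_sdiff.mp ((Finset.mem_union.mp hj).resolve_right hjT)
          exact hdisj i hiI.1 j hjI.1 hij v hvi hvj
  -- structure of an edge meeting only `e₀`
  have hstruct : ∀ (e₀ X g gef : Sym2 V) (i : Fin n), e₀ ∈ R → g ∈ F i → gef ∈ F i →
      X ∈ R → X ≠ e₀ → MeetsOnly R g e₀ → Meets gef e₀ → Meets gef X →
      ∃ a x, a ∈ e₀ ∧ x ∉ e₀ ∧ (∀ p ∈ R, p ≠ e₀ → x ∉ p) ∧ g = s(a, x) ∧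
        (∀ v, v ∈ g → v ∉ gef) := by
    intro e₀ X g gef i he₀ hgF hgefF hX hXe hgO hgefe hgefX
    have hgne : g ≠ gef := by
      rintro rfl
      exact hgO.2 X hX hXe hgefX
    have hdisjg : ∀ v, v ∈ g → v ∉ gef := hmatch i g hgF gef hgefF hgne
    obtain ⟨a, hag, hae⟩ := hgO.1
    obtain ⟨w, hwgef, hwe⟩ := hgefe
    have hwg : w ∉ g := fun hwg => hdisjg w hwg hwgef
    have hwa : w ≠ a := fun h => hwg (h ▸ hag)
    have hxg : Sym2.Mem.other hag ∈ g := Sym2.other_mem hag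
    have hgs : s(a, Sym2.Mem.other hag) = g := Sym2.other_spec hag
    have hxa : Sym2.Mem.other hag ≠ a := Sym2.other_ne (hFdiag i g hgF) hag
    have hxe : Sym2.Mem.other hag ∉ e₀ := by
      intro hxe
      exact sym2_pigeonhole hae hxe hwe hxa.symm hwa.symm (fun h => hwg (h ▸ hxg))
    refine ⟨a, Sym2.Mem.other hag, hae, hxe, ?_, hgs.symm, hdisjg⟩
    intro p hp hpe hxp
    exact hgO.2 p hp hpe ⟨Sym2.Mem.other hag, hxg, hxp⟩
  -- two "private" edges from distinct unrepresented matchings meet e₀ at the same vertex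
  have hcomm : ∀ (e₀ : Sym2 V), e₀ ∈ R → ∀ (i j : Fin n), i ∉ I → j ∉ I → i ≠ j →
      ∀ (a x a' x' : V), a ∈ e₀ → x ∉ e₀ → (∀ p ∈ R, p ≠ e₀ → x ∉ p) →
      a' ∈ e₀ → x' ∉ e₀ → (∀ p ∈ R, p ≠ e₀ → x' ∉ p) →
      s(a, x) ∈ F i → s(a', x') ∈ F j →
      MeetsOnly R s(a, x) e₀ → MeetsOnly R s(a', x') e₀ → a = a' := by
    intro e₀ he₀ i j hiI hjI hij a x a' x' hae hxe hxR ha'e hx'e hx'R hgi hgj hgiO hgjO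
    obtain ⟨k, hkI, hck⟩ := Finset.mem_image.mp he₀
    have hmeet : ∃ v, v ∈ s(a, x) ∧ v ∈ s(a', x') := by
      by_contra hnm
      push_neg at hnm
      have h2 := haug {k} {i, j} (fun t => if t = i then s(a, x) else s(a', x')) ?_ ?_ ?_ ?_ ?_
      · rw [Finset.card_insert_of_notMem (by simp [hij]), Finset.card_singleton,
          Finset.card_singleton] at h2
        omega
      · simp [hkI]
      · intro t ht
        rcases Finset.mem_insert.mp ht with rfl | ht
        · exact hiI
        · obtain rfl := Finset.mem_singleton.mp ht
          exact hjI
      · intro t ht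
        rcases Finset.mem_insert.mp ht with rfl | ht
        · simp only [if_pos]
          exact hgi
        · obtain rfl := Finset.mem_singleton.mp ht
          simp only [if_neg (Ne.symm hij)]
          exact hgj
      · intro t ht t' ht' htt' v hv hv'
        rcases Finset.mem_insert.mp ht with rfl | ht
        · simp only [if_pos] at hv
          rcases Finset.mem_insert.mp ht' with rfl | ht'
          · exact absurd rfl htt'
          · obtain rfl := Finset.mem_singleton.mp ht'
            simp only [if_neg (Ne.symm hij)] at hv'
            exact hnm v hv hv'
        · obtain rfl := Finset.mem_singleton.mp ht
          simp only [if_neg (Ne.symm hij)] at hv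
          rcases Finset.mem_insert.mp ht' with rfl | ht'
          · simp only [if_pos] at hv'
            exact hnm v hv' hv
          · obtain rfl := Finset.mem_singleton.mp ht'
            exact absurd rfl htt'
      · intro t ht j' hj' hj'k v hv hvc
        have hcj'ne : c j' ≠ e₀ := by
          intro hcc
          exact (Finset.notMem_singleton.mp hj'k)
            (hcinj j' hj' k hkI (by rw [hcc, hck]))
        have hcj'R : c j' ∈ R := Finset.mem_image_of_mem c hj'
        rcases Finset.mem_insert.mp ht with rfl | ht
        · simp only [if_pos] at hv
          exact hgiO.2 (c j') hcj'R hcj'ne ⟨v, hv, hvc⟩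
        · obtain rfl := Finset.mem_singleton.mp ht
          simp only [if_neg (Ne.symm hij)] at hv
          exact hgjO.2 (c j') hcj'R hcj'ne ⟨v, hv, hvc⟩
    obtain ⟨v, hv1, hv2⟩ := hmeet
    rw [Sym2.mem_iff] at hv1 hv2
    rcases hv1 with rfl | rfl
    · rcases hv2 with h | h
      · exact h
      · exact absurd (h ▸ hae) hx'e
    · rcases hv2 with h | h
      · exact absurd (h ▸ ha'e) hxe
      · by_contra haa'
        have hadj1 : G.Adj a a' := adj_of_mem_edge G (hRedge e₀ he₀) hae ha'e haa'
        have hadj2 : G.Adj a v := G.mem_edgeSet.mp (hedges i _ hgi)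
        have hadj3 : G.Adj a' v := by
          have h3 := G.mem_edgeSet.mp (hedges j _ hgj)
          rw [← h] at h3
          exact h3
        exact no_C3 G hfree hadj1 hadj3 hadj2.symm
  -- unpack the two given wasteful pairs
  obtain ⟨ge₁, hge₁F, gf₁, hgf₁F, gef₁, hgef₁F, hge₁O, hgf₁O, hgef₁e, hgef₁f⟩ := hw₁
  obtain ⟨ge₂, hge₂F, gf₂, hgf₂F, gef₂, hgef₂F, hge₂O, hgf₂O, hgef₂e, hgef₂f⟩ := hw₂
  have hgef₁e' := hgef₁e
  have hgef₁f' := hgef₁f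
  have hfe : f ≠ e := Ne.symm hef
  obtain ⟨a₁, x₁, ha₁e, hx₁e, hx₁R, hge₁eq, hge₁disj⟩ :=
    hstruct e f ge₁ gef₁ i₁ he hge₁F hgef₁F hf hfe hge₁O hgef₁e hgef₁f
  obtain ⟨a₂, x₂, ha₂e, hx₂e, hx₂R, hge₂eq, hge₂disj⟩ :=
    hstruct e f ge₂ gef₂ i₂ he hge₂F hgef₂F hf hfe hge₂O hgef₂e hgef₂f
  obtain ⟨vc₁, z₁, hvc₁f, hz₁f, hz₁R, hgf₁eq, hgf₁disj⟩ :=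
    hstruct f e gf₁ gef₁ i₁ hf hgf₁F hgef₁F he hef hgf₁O hgef₁f hgef₁e
  obtain ⟨vc₂, z₂, hvc₂f, hz₂f, hz₂R, hgf₂eq, hgf₂disj⟩ :=
    hstruct f e gf₂ gef₂ i₂ hf hgf₂F hgef₂F he hef hgf₂O hgef₂f hgef₂e
  have ha12 : a₁ = a₂ :=
    hcomm e he i₁ i₂ hi₁ hi₂ hne a₁ x₁ a₂ x₂ ha₁e hx₁e hx₁R ha₂e hx₂e hx₂R
      (hge₁eq ▸ hge₁F) (hge₂eq ▸ hge₂F) (hge₁eq ▸ hge₁O) (hge₂eq ▸ hge₂O)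
  have hvc12 : vc₁ = vc₂ :=
    hcomm f hf i₁ i₂ hi₁ hi₂ hne vc₁ z₁ vc₂ z₂ hvc₁f hz₁f hz₁R hvc₂f hz₂f hz₂R
      (hgf₁eq ▸ hgf₁F) (hgf₂eq ▸ hgf₂F) (hgf₁eq ▸ hgf₁O) (hgf₂eq ▸ hgf₂O)
  -- second endpoints of e and f
  have hvb : Sym2.Mem.other ha₁e ∈ e := Sym2.other_mem ha₁e
  have he_eq : s(a₁, Sym2.Mem.other ha₁e) = e := Sym2.other_spec ha₁e
  have hvba : Sym2.Mem.other ha₁e ≠ a₁ := Sym2.other_ne (hRdiag e he) ha₁e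
  set vb := Sym2.Mem.other ha₁e with hvbdef
  have hvd : Sym2.Mem.other hvc₁f ∈ f := Sym2.other_mem hvc₁f
  have hf_eq : s(vc₁, Sym2.Mem.other hvc₁f) = f := Sym2.other_spec hvc₁f
  have hvdc : Sym2.Mem.other hvc₁f ≠ vc₁ := Sym2.other_ne (hRdiag f hf) hvc₁f
  set vd := Sym2.Mem.other hvc₁f with hvddef
  have hefdisj : ∀ v, v ∈ e → v ∉ f := hRdisj e he f hf hef
  -- gef₁ = s(vb, vd)
  have hbd : vb ≠ vd := fun h => hefdisj vb hvb (h ▸ hvd)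
  obtain ⟨w₁, hw₁gef, hw₁e⟩ := hgef₁e
  have hw₁b : w₁ = vb := by
    have hng : w₁ ∉ ge₁ := fun hmem => hge₁disj w₁ hmem hw₁gef
    have hw₁a : w₁ ≠ a₁ := fun h => hng (by rw [hge₁eq, h]; simp)
    rw [← he_eq, Sym2.mem_iff] at hw₁e
    tauto
  obtain ⟨w₂, hw₂gef, hw₂f⟩ := hgef₁f
  have hw₂d : w₂ = vd := by
    have hng : w₂ ∉ gf₁ := fun hmem => hgf₁disj w₂ hmem hw₂gef
    have hw₂c : w₂ ≠ vc₁ := fun h => hng (by rw [hgf₁eq, h]; simp)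
    rw [← hf_eq, Sym2.mem_iff] at hw₂f
    tauto
  have hgef₁eq : gef₁ = s(vb, vd) :=
    sym2_eq_of_mem (hFdiag i₁ _ hgef₁F) (hw₁b ▸ hw₁gef) (hw₂d ▸ hw₂gef) hbd
  -- the key claim: no third unrepresented matching is half-wasteful at e
  have hkey : ∀ i₃, i₃ ∉ I → i₃ ≠ i₁ → i₃ ≠ i₂ → ¬ HalfWasteful R (F i₃) e := by
    intro i₃ hi₃ h31 h32 hw3
    obtain ⟨f₃, hf₃R, hf₃e, ge₃, hge₃F, gf₃, hgf₃F, gef₃, hgef₃F, hge₃O, hgf₃O,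
      hgef₃e, hgef₃f⟩ := hw3
    obtain ⟨a₃, x₃, ha₃e, hx₃e, hx₃R, hge₃eq, hge₃disj⟩ :=
      hstruct e f₃ ge₃ gef₃ i₃ he hge₃F hgef₃F hf₃R hf₃e hge₃O hgef₃e hgef₃f
    have ha13 : a₁ = a₃ :=
      hcomm e he i₁ i₃ hi₁ hi₃ (Ne.symm h31) a₁ x₁ a₃ x₃ ha₁e hx₁e hx₁R ha₃e hx₃e hx₃R
        (hge₁eq ▸ hge₁F) (hge₃eq ▸ hge₃F) (hge₁eq ▸ hge₁O) (hge₃eq ▸ hge₃O)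
    have hx₃f : x₃ ∉ f := hx₃R f hf hfe
    have hz₂e : z₂ ∉ e := hz₂R e he hef
    have hvcₑ : vc₁ ∉ e := fun h => hefdisj vc₁ h hvc₁f
    have hvde : vd ∉ e := fun h => hefdisj vd h hvd
    -- x₃ ≠ z₂, else we find a 5-cycle
    have hx3z2 : x₃ ≠ z₂ := by
      intro hxz
      have hadjba : G.Adj vb a₁ :=
        (adj_of_mem_edge G (hRedge e he) ha₁e hvb hvba.symm).symm
      have hadj1 : G.Adj a₁ x₃ := by
        have h1 := G.mem_edgeSet.mp (hedges i₃ _ (hge₃eq ▸ hge₃F))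
        rw [← ha13] at h1
        exact h1
      have hadj2 : G.Adj x₃ vc₁ := by
        have h2 := G.mem_edgeSet.mp (hedges i₂ _ (hgf₂eq ▸ hgf₂F))
        rw [← hvc12, ← hxz] at h2
        exact h2.symm
      have hadj3 : G.Adj vc₁ vd := adj_of_mem_edge G (hRedge f hf) hvc₁f hvd hvdc.symm
      have hadj4 : G.Adj vd vb :=
        (G.mem_edgeSet.mp ((hgef₁eq ▸ hgef₁F : s(vb, vd) ∈ F i₁) |> hedges i₁ _)).symm
      exact no_C5 G hfree hadjba hadj1 hadj2 hadj3 hadj4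
        (fun h => hx₃e (h ▸ hvb)) (fun h => hvcₑ (h ▸ hvb)) (fun h => hvcₑ (h ▸ ha₁e))
        (fun h => hvde (h ▸ ha₁e)) (fun h => hx₃f (h ▸ hvd))
    -- pairwise disjointness of the three new edges
    have hd12 : ∀ v, v ∈ gef₁ → v ∉ gf₂ := by
      intro v hv hv'
      rw [hgef₁eq, Sym2.mem_iff] at hv
      rw [hgf₂eq, ← hvc12, Sym2.mem_iff] at hv'
      rcases hv with rfl | rfl <;> rcases hv' with h | h
      · exact hvcₑ (h ▸ hvb)
      · exact hz₂e (h ▸ hvb)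
      · exact hvdc h
      · exact hz₂f (h ▸ hvd)
    have hd13 : ∀ v, v ∈ gef₁ → v ∉ ge₃ := by
      intro v hv hv'
      rw [hgef₁eq, Sym2.mem_iff] at hv
      rw [hge₃eq, ← ha13, Sym2.mem_iff] at hv'
      rcases hv with rfl | rfl <;> rcases hv' with h | h
      · exact hvba h
      · exact hx₃e (h ▸ hvb)
      · exact hvde (h ▸ ha₁e)
      · exact hx₃f (h ▸ hvd)
    have hd23 : ∀ v, v ∈ gf₂ → v ∉ ge₃ := by
      intro v hv hv'
      rw [hgf₂eq, ← hvc12, Sym2.mem_iff] at hv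
      rw [hge₃eq, ← ha13, Sym2.mem_iff] at hv'
      rcases hv with rfl | rfl <;> rcases hv' with h | h
      · exact hvcₑ (h ▸ ha₁e)
      · exact hx₃f (h ▸ hvc₁f)
      · exact hz₂e (h ▸ ha₁e)
      · exact hx3z2 h.symm
    have hsym12 : ∀ v, v ∈ gf₂ → v ∉ gef₁ := fun v h h' => hd12 v h' h
    have hsym13 : ∀ v, v ∈ ge₃ → v ∉ gef₁ := fun v h h' => hd13 v h' h
    have hsym23 : ∀ v, v ∈ ge₃ → v ∉ gf₂ := fun v h h' => hd23 v h' h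
    have hT3 : ({i₁, i₂, i₃} : Finset (Fin n)).card = 3 := by
      rw [Finset.card_insert_of_notMem (by simp [hne, Ne.symm h31]),
        Finset.card_insert_of_notMem (by simp [Ne.symm h32]), Finset.card_singleton]
    have hK2 : ({ie, if'} : Finset (Fin n)).card = 2 := by
      rw [Finset.card_insert_of_notMem (by simp [hieif]), Finset.card_singleton]
    have hcard := haug {ie, if'} {i₁, i₂, i₃}
      (fun t => if t = i₁ then gef₁ else if t = i₂ then gf₂ else ge₃) ?_ ?_ ?_ ?_ ?_
    · rw [hT3, hK2] at hcard
      omega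
    · intro t ht
      rcases Finset.mem_insert.mp ht with rfl | ht
      · exact hie
      · obtain rfl := Finset.mem_singleton.mp ht
        exact hif
    · intro t ht
      rcases Finset.mem_insert.mp ht with rfl | ht
      · exact hi₁
      rcases Finset.mem_insert.mp ht with rfl | ht
      · exact hi₂
      · obtain rfl := Finset.mem_singleton.mp ht
        exact hi₃
    · intro t ht
      rcases Finset.mem_insert.mp ht with rfl | ht
      · simp only [if_pos]
        exact hgef₁F
      rcases Finset.mem_insert.mp ht with rfl | ht
      · simp only [if_neg hne.symm, if_pos]
        exact hgf₂F
      · obtain rfl := Finset.mem_singleton.mp ht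
        simp only [if_neg h31, if_neg h32]
        exact hge₃F
    · intro t ht t' ht' htt' v hv hv'
      rcases Finset.mem_insert.mp ht with rfl | ht
      · simp only [if_pos] at hv
        rcases Finset.mem_insert.mp ht' with rfl | ht'
        · exact absurd rfl htt'
        rcases Finset.mem_insert.mp ht' with rfl | ht'
        · simp only [if_neg hne.symm, if_pos] at hv'
          exact hd12 v hv hv'
        · obtain rfl := Finset.mem_singleton.mp ht'
          simp only [if_neg h31, if_neg h32] at hv'
          exact hd13 v hv hv'
      rcases Finset.mem_insert.mp ht with rfl | ht
      · simp only [if_neg hne.symm, if_pos] at hv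
        rcases Finset.mem_insert.mp ht' with rfl | ht'
        · simp only [if_pos] at hv'
          exact hsym12 v hv hv'
        rcases Finset.mem_insert.mp ht' with rfl | ht'
        · exact absurd rfl htt'
        · obtain rfl := Finset.mem_singleton.mp ht'
          simp only [if_neg h31, if_neg h32] at hv'
          exact hd23 v hv hv'
      · obtain rfl := Finset.mem_singleton.mp ht
        simp only [if_neg h31, if_neg h32] at hv
        rcases Finset.mem_insert.mp ht' with rfl | ht'
        · simp only [if_pos] at hv'
          exact hsym13 v hv hv'
        rcases Finset.mem_insert.mp ht' with rfl | ht'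
        · simp only [if_neg hne.symm, if_pos] at hv'
          exact hsym23 v hv hv'
        · obtain rfl := Finset.mem_singleton.mp ht'
          exact absurd rfl htt'
    · intro t ht j hj hjK v hv hvc
      have hjie : j ≠ ie := fun h => hjK (by simp [h])
      have hjif : j ≠ if' := fun h => hjK (by simp [h])
      have hcje : c j ≠ e := fun h => hjie (hcinj j hj ie hie (by rw [h, hcie]))
      have hcjf : c j ≠ f := fun h => hjif (hcinj j hj if' hif (by rw [h, hcif]))
      have hcjR : c j ∈ R := Finset.mem_image_of_mem c hj
      rcases Finset.mem_insert.mp ht with rfl | ht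
      · simp only [if_pos] at hv
        rw [hgef₁eq, Sym2.mem_iff] at hv
        rcases hv with rfl | rfl
        · exact hRdisj e he (c j) hcjR (Ne.symm hcje) vb hvb hvc
        · exact hRdisj f hf (c j) hcjR (Ne.symm hcjf) vd hvd hvc
      rcases Finset.mem_insert.mp ht with rfl | ht
      · simp only [if_neg hne.symm, if_pos] at hv
        exact hgf₂O.2 (c j) hcjR hcjf ⟨v, hv, hvc⟩
      · obtain rfl := Finset.mem_singleton.mp ht
        simp only [if_neg h31, if_neg h32] at hv
        exact hge₃O.2 (c j) hcjR hcje ⟨v, hv, hvc⟩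
  -- conclude
  have hS : {i : Fin n | i ∉ I ∧ HalfWasteful R (F i) e} = {i₁, i₂} := by
    ext t
    simp only [Set.mem_setOf_eq, Set.mem_insert_iff, Set.mem_singleton_iff]
    constructor
    · rintro ⟨htI, hw⟩
      by_contra hcon
      push_neg at hcon
      exact hkey t htI hcon.1 hcon.2 hw
    · rintro (rfl | rfl)
      · exact ⟨hi₁, f, hf, hfe, ge₁, hge₁F, gf₁, hgf₁F, gef₁, hgef₁F, hge₁O, hgf₁O,
          hgef₁e', hgef₁f'⟩
      · exact ⟨hi₂, f, hf, hfe, ge₂, hge₂F, gf₂, hgf₂F, gef₂, hgef₂F, hge₂O, hgf₂O,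
          hgef₂e, hgef₂f⟩
  show hwDeg F I R e = 2
  unfold hwDeg
  rw [hS, Set.ncard_pair hne]
end

section
/- Let G be a graph with no cycle of length 3 and no cycle of length 5, let F_1, …, F_n be matchings of size n in G, and let R be a rainbow matching of maximum size. For e ∈ R let deg(e) be the number of unrepresented matchings F_i for which e is half-F_i-wasteful, and let D = {e ∈ R : deg(e) ≥ 3}. Then there exist sets S(e) ⊆ R for e ∈ D such that: (1) |S(e)| = deg(e); (2) every f ∈ S(e) satisfies deg(f) = 1; and (3) S(e) ∩ S(e') = ∅ whenever e, e' ∈ D are distinct. -/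
section Aux14
open SimpleGraph


lemma no_c3_s14 {V : Type*} {G : SimpleGraph V}
    (hfree : ∀ (v : V) (w : G.Walk v v), w.IsCycle → w.length ≠ 3 ∧ w.length ≠ 5)
    {x y z : V} (hxy : G.Adj x y) (hyz : G.Adj y z) (hzx : G.Adj z x) : False := by
  have hxz : x ≠ z := fun h => by subst h; exact G.irrefl hzx
  have hcyc : (Walk.cons hxy (Walk.cons hyz (Walk.cons hzx Walk.nil))).IsCycle := by
    simp [Walk.isCycle_def, Walk.isTrail_def, hxy.ne, hyz.ne, hzx.ne, hxz, Ne.symm hxz,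
      (hxy.ne).symm, (hyz.ne).symm, (hzx.ne).symm, Sym2.eq, Sym2.rel_iff']
  exact absurd ((hfree x _ hcyc).1) (by simp)

lemma no_c5_s14 {V : Type*} {G : SimpleGraph V}
    (hfree : ∀ (v : V) (w : G.Walk v v), w.IsCycle → w.length ≠ 3 ∧ w.length ≠ 5)
    {v1 v2 v3 v4 v5 : V} (h12 : G.Adj v1 v2) (h23 : G.Adj v2 v3) (h34 : G.Adj v3 v4)
    (h45 : G.Adj v4 v5) (h51 : G.Adj v5 v1)
    (h13 : v1 ≠ v3) (h14 : v1 ≠ v4) (h24 : v2 ≠ v4) (h25 : v2 ≠ v5) (h35 : v3 ≠ v5) : False := by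
  have hcyc : (Walk.cons h12 (Walk.cons h23 (Walk.cons h34 (Walk.cons h45 (Walk.cons h51 Walk.nil))))).IsCycle := by
    simp [Walk.isCycle_def, Walk.isTrail_def, h12.ne, h23.ne, h34.ne, h45.ne, h51.ne,
      h13, h14, h24, h25, h35, Ne.symm h13, Ne.symm h14, Ne.symm h24, Ne.symm h25, Ne.symm h35,
      (h12.ne).symm, (h23.ne).symm, (h34.ne).symm, (h45.ne).symm, (h51.ne).symm, Sym2.eq, Sym2.rel_iff']
  exact absurd ((hfree v1 _ hcyc).2) (by simp)

lemma aug3 {V : Type*} [DecidableEq V] {n : ℕ} (F : Fin n → Finset (Sym2 V))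
    (I : Finset (Fin n)) (c : Fin n → Sym2 V)
    (hc : ∀ i ∈ I, c i ∈ F i)
    (hdisj : ∀ i ∈ I, ∀ j ∈ I, i ≠ j → ∀ v, v ∈ c i → v ∉ c j)
    (hmax : ∀ (J : Finset (Fin n)) (d : Fin n → Sym2 V),
      (∀ i ∈ J, d i ∈ F i) →
      (∀ i ∈ J, ∀ j ∈ J, i ≠ j → ∀ v, v ∈ d i → v ∉ d j) →
      J.card ≤ I.card)
    {j1 j2 : Fin n} (hj1 : j1 ∈ I) (hj2 : j2 ∈ I) (hjj : j1 ≠ j2)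
    {i1 i2 i3 : Fin n} (hi1 : i1 ∉ I) (hi2 : i2 ∉ I) (hi3 : i3 ∉ I)
    (h12 : i1 ≠ i2) (h13 : i1 ≠ i3) (h23 : i2 ≠ i3)
    {g1 g2 g3 : Sym2 V} (hg1 : g1 ∈ F i1) (hg2 : g2 ∈ F i2) (hg3 : g3 ∈ F i3)
    (d12 : ∀ v ∈ g1, v ∉ g2) (d13 : ∀ v ∈ g1, v ∉ g3) (d23 : ∀ v ∈ g2, v ∉ g3)
    (a1 : ∀ k ∈ I, k ≠ j1 → k ≠ j2 → ∀ v ∈ g1, v ∉ c k)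
    (a2 : ∀ k ∈ I, k ≠ j1 → k ≠ j2 → ∀ v ∈ g2, v ∉ c k)
    (a3 : ∀ k ∈ I, k ≠ j1 → k ≠ j2 → ∀ v ∈ g3, v ∉ c k) : False := by
  classical
  set d : Fin n → Sym2 V := fun m => if m = i1 then g1 else if m = i2 then g2 else
    if m = i3 then g3 else c m with hd
  set J : Finset (Fin n) := insert i1 (insert i2 (insert i3 (I \ {j1, j2}))) with hJ
  have dv1 : d i1 = g1 := by simp [hd]
  have dv2 : d i2 = g2 := by simp [hd, h12.symm]
  have dv3 : d i3 = g3 := by simp [hd, h13.symm, h23.symm]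
  have dvo : ∀ m ∈ I, d m = c m := by
    intro m hm
    have m1 : m ≠ i1 := fun h => hi1 (h ▸ hm)
    have m2 : m ≠ i2 := fun h => hi2 (h ▸ hm)
    have m3 : m ≠ i3 := fun h => hi3 (h ▸ hm)
    simp [hd, m1, m2, m3]
  have hmem : ∀ m ∈ J, d m ∈ F m := by
    intro m hm
    simp only [hJ, Finset.mem_insert, Finset.mem_sdiff, Finset.mem_singleton] at hm
    rcases hm with rfl | rfl | rfl | ⟨hmI, _⟩
    · rwa [dv1]
    · rwa [dv2]
    · rwa [dv3]
    · rw [dvo m hmI]; exact hc m hmI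
  have hpair : ∀ p ∈ J, ∀ q ∈ J, p ≠ q → ∀ v, v ∈ d p → v ∉ d q := by
    intro p hp q hq hpq v hvp hvq
    simp only [hJ, Finset.mem_insert, Finset.mem_sdiff, Finset.mem_singleton] at hp hq
    have notj : ∀ {m : Fin n}, m ∈ I ∧ ¬(m = j1 ∨ m = j2) →
        m ∈ I ∧ m ≠ j1 ∧ m ≠ j2 := by tauto
    rcases hp with rfl | rfl | rfl | hpo <;> rcases hq with rfl | rfl | rfl | hqo
    · exact hpq rfl
    · rw [dv1] at hvp; rw [dv2] at hvq; exact d12 v hvp hvq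
    · rw [dv1] at hvp; rw [dv3] at hvq; exact d13 v hvp hvq
    · obtain ⟨hqI, hq1, hq2⟩ := notj hqo
      rw [dv1] at hvp; rw [dvo q hqI] at hvq; exact a1 q hqI hq1 hq2 v hvp hvq
    · rw [dv2] at hvp; rw [dv1] at hvq; exact d12 v hvq hvp
    · exact hpq rfl
    · rw [dv2] at hvp; rw [dv3] at hvq; exact d23 v hvp hvq
    · obtain ⟨hqI, hq1, hq2⟩ := notj hqo
      rw [dv2] at hvp; rw [dvo q hqI] at hvq; exact a2 q hqI hq1 hq2 v hvp hvq
    · rw [dv3] at hvp; rw [dv1] at hvq; exact d13 v hvq hvp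
    · rw [dv3] at hvp; rw [dv2] at hvq; exact d23 v hvq hvp
    · exact hpq rfl
    · obtain ⟨hqI, hq1, hq2⟩ := notj hqo
      rw [dv3] at hvp; rw [dvo q hqI] at hvq; exact a3 q hqI hq1 hq2 v hvp hvq
    · obtain ⟨hpI, hp1, hp2⟩ := notj hpo
      rw [dvo p hpI] at hvp; rw [dv1] at hvq; exact a1 p hpI hp1 hp2 v hvq hvp
    · obtain ⟨hpI, hp1, hp2⟩ := notj hpo
      rw [dvo p hpI] at hvp; rw [dv2] at hvq; exact a2 p hpI hp1 hp2 v hvq hvp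
    · obtain ⟨hpI, hp1, hp2⟩ := notj hpo
      rw [dvo p hpI] at hvp; rw [dv3] at hvq; exact a3 p hpI hp1 hp2 v hvq hvp
    · obtain ⟨hpI, _, _⟩ := notj hpo
      obtain ⟨hqI, _, _⟩ := notj hqo
      rw [dvo p hpI] at hvp; rw [dvo q hqI] at hvq
      exact hdisj p hpI q hqI hpq v hvp hvq
  have hcard : J.card = I.card + 1 := by
    have hsub : ({j1, j2} : Finset (Fin n)) ⊆ I := by
      intro x hx; simp only [Finset.mem_insert, Finset.mem_singleton] at hx
      rcases hx with rfl | rfl <;> assumption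
    have h2 : ({j1, j2} : Finset (Fin n)).card = 2 := by
      rw [Finset.card_insert_of_notMem (by simp [hjj]), Finset.card_singleton]
    have hIcard : 2 ≤ I.card := by
      calc 2 = ({j1, j2} : Finset (Fin n)).card := h2.symm
        _ ≤ I.card := Finset.card_le_card hsub
    have hsd : (I \ {j1, j2}).card = I.card - 2 := by
      rw [Finset.card_sdiff_of_subset hsub, h2]
    have n3 : i3 ∉ I \ {j1, j2} := fun h => hi3 (Finset.mem_sdiff.mp h).1
    have n2 : i2 ∉ insert i3 (I \ {j1, j2}) := by
      simp only [Finset.mem_insert]; rintro (rfl | h)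
      · exact h23 rfl
      · exact hi2 (Finset.mem_sdiff.mp h).1
    have n1 : i1 ∉ insert i2 (insert i3 (I \ {j1, j2})) := by
      simp only [Finset.mem_insert]; rintro (rfl | rfl | h)
      · exact h12 rfl
      · exact h13 rfl
      · exact hi1 (Finset.mem_sdiff.mp h).1
    rw [hJ, Finset.card_insert_of_notMem n1, Finset.card_insert_of_notMem n2,
      Finset.card_insert_of_notMem n3, hsd]
    omega
  have := hmax J d hmem hpair
  omega

lemma aug2 {V : Type*} [DecidableEq V] {n : ℕ} (F : Fin n → Finset (Sym2 V))
    (I : Finset (Fin n)) (c : Fin n → Sym2 V)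
    (hc : ∀ i ∈ I, c i ∈ F i)
    (hdisj : ∀ i ∈ I, ∀ j ∈ I, i ≠ j → ∀ v, v ∈ c i → v ∉ c j)
    (hmax : ∀ (J : Finset (Fin n)) (d : Fin n → Sym2 V),
      (∀ i ∈ J, d i ∈ F i) →
      (∀ i ∈ J, ∀ j ∈ J, i ≠ j → ∀ v, v ∈ d i → v ∉ d j) →
      J.card ≤ I.card)
    {j : Fin n} (hj : j ∈ I)
    {i1 i2 : Fin n} (hi1 : i1 ∉ I) (hi2 : i2 ∉ I) (h12 : i1 ≠ i2)
    {g1 g2 : Sym2 V} (hg1 : g1 ∈ F i1) (hg2 : g2 ∈ F i2)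
    (d12 : ∀ v ∈ g1, v ∉ g2)
    (a1 : ∀ k ∈ I, k ≠ j → ∀ v ∈ g1, v ∉ c k)
    (a2 : ∀ k ∈ I, k ≠ j → ∀ v ∈ g2, v ∉ c k) : False := by
  classical
  set d : Fin n → Sym2 V := fun m => if m = i1 then g1 else if m = i2 then g2 else c m with hd
  set J : Finset (Fin n) := insert i1 (insert i2 (I \ {j})) with hJ
  have dv1 : d i1 = g1 := by simp [hd]
  have dv2 : d i2 = g2 := by simp [hd, h12.symm]
  have dvo : ∀ m ∈ I, d m = c m := by
    intro m hm
    have m1 : m ≠ i1 := fun h => hi1 (h ▸ hm)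
    have m2 : m ≠ i2 := fun h => hi2 (h ▸ hm)
    simp [hd, m1, m2]
  have hmem : ∀ m ∈ J, d m ∈ F m := by
    intro m hm
    simp only [hJ, Finset.mem_insert, Finset.mem_sdiff, Finset.mem_singleton] at hm
    rcases hm with rfl | rfl | ⟨hmI, _⟩
    · rwa [dv1]
    · rwa [dv2]
    · rw [dvo m hmI]; exact hc m hmI
  have hpair : ∀ p ∈ J, ∀ q ∈ J, p ≠ q → ∀ v, v ∈ d p → v ∉ d q := by
    intro p hp q hq hpq v hvp hvq
    simp only [hJ, Finset.mem_insert, Finset.mem_sdiff, Finset.mem_singleton] at hp hq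
    rcases hp with rfl | rfl | ⟨hpI, hpj⟩ <;> rcases hq with rfl | rfl | ⟨hqI, hqj⟩
    · exact hpq rfl
    · rw [dv1] at hvp; rw [dv2] at hvq; exact d12 v hvp hvq
    · rw [dv1] at hvp; rw [dvo q hqI] at hvq; exact a1 q hqI hqj v hvp hvq
    · rw [dv2] at hvp; rw [dv1] at hvq; exact d12 v hvq hvp
    · exact hpq rfl
    · rw [dv2] at hvp; rw [dvo q hqI] at hvq; exact a2 q hqI hqj v hvp hvq
    · rw [dvo p hpI] at hvp; rw [dv1] at hvq; exact a1 p hpI hpj v hvq hvp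
    · rw [dvo p hpI] at hvp; rw [dv2] at hvq; exact a2 p hpI hpj v hvq hvp
    · rw [dvo p hpI] at hvp; rw [dvo q hqI] at hvq
      exact hdisj p hpI q hqI hpq v hvp hvq
  have hcard : J.card = I.card + 1 := by
    have hIcard : 1 ≤ I.card := Finset.card_pos.mpr ⟨j, hj⟩
    have hsd : (I \ {j}).card = I.card - 1 := by
      rw [Finset.card_sdiff_of_subset (by simpa using hj), Finset.card_singleton]
    have n2 : i2 ∉ I \ {j} := fun h => hi2 (Finset.mem_sdiff.mp h).1
    have n1 : i1 ∉ insert i2 (I \ {j}) := by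
      simp only [Finset.mem_insert]; rintro (rfl | h)
      · exact h12 rfl
      · exact hi1 (Finset.mem_sdiff.mp h).1
    rw [hJ, Finset.card_insert_of_notMem n1, Finset.card_insert_of_notMem n2, hsd]
    omega
  have := hmax J d hmem hpair
  omega

lemma config14 {V : Type*} [DecidableEq V] {G : SimpleGraph V} {R A : Finset (Sym2 V)}
    (hRE : ∀ e ∈ R, e ∈ G.edgeSet)
    (hRm : ∀ e ∈ R, ∀ f ∈ R, e ≠ f → ∀ v, v ∈ e → v ∉ f)
    (hAE : ∀ g ∈ A, g ∈ G.edgeSet)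
    (hAm : ∀ e ∈ A, ∀ f ∈ A, e ≠ f → ∀ v, v ∈ e → v ∉ f)
    {e f : Sym2 V} (he : e ∈ R) (hf : f ∈ R) (hef : e ≠ f)
    (hp : HalfWastefulPair R A e f) :
    ∃ a b u cc dd w, e = s(a, b) ∧ f = s(cc, dd) ∧
      s(a, u) ∈ A ∧ s(b, cc) ∈ A ∧ s(dd, w) ∈ A ∧
      MeetsOnly R s(a, u) e ∧ MeetsOnly R s(dd, w) f ∧
      (∀ g ∈ R, u ∉ g) ∧ (∀ g ∈ R, w ∉ g) := by
  obtain ⟨ge, hgeA, gf, hgfA, gef, hgefA, hge, hgf, hme, hmf⟩ := hp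
  obtain ⟨b, hbgef, hbe⟩ := hme
  obtain ⟨cc, hcgef, hcf⟩ := hmf
  have hbc : b ≠ cc := by
    intro h; exact hRm e he f hf hef b hbe (h ▸ hcf)
  obtain ⟨y, hy⟩ := Sym2.mem_iff_exists.mp hbgef
  have hgef_eq : gef = s(b, cc) := by
    rw [hy] at hcgef ⊢
    rcases Sym2.mem_iff.mp hcgef with h | h
    · exact absurd h.symm hbc
    · rw [h]
  -- ge ≠ gef, so disjoint
  have hge_ne : ge ≠ gef := by
    intro h
    exact hge.2 f hf (Ne.symm hef) ⟨cc, h ▸ (hgef_eq ▸ (by simp [Sym2.mem_iff] : cc ∈ s(b, cc))), hcf⟩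
  have hdisj_ge : ∀ v ∈ ge, v ∉ gef := hAm ge hgeA gef hgefA hge_ne
  -- the vertex of e hit by ge is not b
  obtain ⟨a0, ha0ge, ha0e⟩ := hge.1
  obtain ⟨a, ha⟩ := Sym2.mem_iff_exists.mp hbe
  have hab : b ≠ a := by
    have h := hRE e he
    rw [ha, SimpleGraph.mem_edgeSet] at h
    exact h.ne
  have ha0a : a0 = a := by
    rcases Sym2.mem_iff.mp (ha ▸ ha0e) with h | h
    · exfalso; exact hdisj_ge a0 ha0ge (h ▸ (hgef_eq ▸ (by simp [Sym2.mem_iff] : b ∈ s(b, cc))))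
    · exact h
  obtain ⟨u, hu⟩ := Sym2.mem_iff_exists.mp (ha0a ▸ ha0ge)
  have hua : u ≠ a := by
    have h := hAE ge hgeA
    rw [hu, SimpleGraph.mem_edgeSet] at h
    exact fun hh => h.ne hh.symm
  have hub : u ≠ b := by
    intro h
    exact hdisj_ge u (by simp [hu, Sym2.mem_iff]) (h ▸ (hgef_eq ▸ (by simp [Sym2.mem_iff] : b ∈ s(b, cc))))
  have huR : ∀ g ∈ R, u ∉ g := by
    intro g hg hug
    by_cases hge' : g = e
    · subst hge'
      rcases Sym2.mem_iff.mp (ha ▸ hug) with h | h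
      · exact hub h
      · exact hua h
    · exact hge.2 g hg hge' ⟨u, by simp [hu, Sym2.mem_iff], hug⟩
  -- f side
  have hgf_ne : gf ≠ gef := by
    intro h
    exact hgf.2 e he hef ⟨b, h ▸ (hgef_eq ▸ (by simp [Sym2.mem_iff] : b ∈ s(b, cc))), hbe⟩
  have hdisj_gf : ∀ v ∈ gf, v ∉ gef := hAm gf hgfA gef hgefA hgf_ne
  obtain ⟨d0, hd0gf, hd0f⟩ := hgf.1
  obtain ⟨dd, hdd⟩ := Sym2.mem_iff_exists.mp hcf
  have hcd : cc ≠ dd := by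
    have h := hRE f hf
    rw [hdd, SimpleGraph.mem_edgeSet] at h
    exact h.ne
  have hd0d : d0 = dd := by
    rcases Sym2.mem_iff.mp (hdd ▸ hd0f) with h | h
    · exfalso; exact hdisj_gf d0 hd0gf (h ▸ (hgef_eq ▸ (by simp [Sym2.mem_iff] : cc ∈ s(b, cc))))
    · exact h
  obtain ⟨w, hw⟩ := Sym2.mem_iff_exists.mp (hd0d ▸ hd0gf)
  have hwd : w ≠ dd := by
    have h := hAE gf hgfA
    rw [hw, SimpleGraph.mem_edgeSet] at h
    exact fun hh => h.ne hh.symm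
  have hwc : w ≠ cc := by
    intro h
    exact hdisj_gf w (by simp [hw, Sym2.mem_iff]) (h ▸ (hgef_eq ▸ (by simp [Sym2.mem_iff] : cc ∈ s(b, cc))))
  have hwR : ∀ g ∈ R, w ∉ g := by
    intro g hg hwg
    by_cases hgf' : g = f
    · subst hgf'
      rcases Sym2.mem_iff.mp (hdd ▸ hwg) with h | h
      · exact hwc h
      · exact hwd h
    · exact hgf.2 g hg hgf' ⟨w, by simp [hw, Sym2.mem_iff], hwg⟩
  refine ⟨a, b, u, cc, dd, w, ha.trans Sym2.eq_swap, hdd, ?_, ?_, ?_, ?_, ?_, huR, hwR⟩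
  · rw [← hu]; exact hgeA
  · rw [← hgef_eq]; exact hgefA
  · rw [← hw]; exact hgfA
  · rw [← hu]; exact hge
  · rw [← hw]; exact hgf

end Aux14

/-- In a graph with no 3-cycle and no 5-cycle, with `F₁, …, Fₙ`
matchings of size `n` and `R = I.image c` a maximum-size rainbow matching: letting
`deg e` be the number of unrepresented matchings `Fᵢ` for which `e` is
half-`Fᵢ`-wasteful and `D = {e ∈ R : deg e ≥ 3}`, there are sets `S(e) ⊆ R` for `e ∈ D`
with `|S(e)| = deg e`, every `f ∈ S(e)` having `deg f = 1`, and `S(e) ∩ S(e') = ∅` for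
distinct `e, e' ∈ D`. -/
theorem stmt_14 {V : Type*} [DecidableEq V] (G : SimpleGraph V) (n : ℕ)
    (hfree : ∀ (v : V) (w : G.Walk v v), w.IsCycle → w.length ≠ 3 ∧ w.length ≠ 5)
    (F : Fin n → Finset (Sym2 V))
    (hedges : ∀ i, ∀ e ∈ F i, e ∈ G.edgeSet)
    (hmatch : ∀ i, ∀ e ∈ F i, ∀ f ∈ F i, e ≠ f → ∀ v, v ∈ e → v ∉ f)
    (hsize : ∀ i, (F i).card = n)
    (I : Finset (Fin n)) (c : Fin n → Sym2 V)
    (hc : ∀ i ∈ I, c i ∈ F i)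
    (hdisj : ∀ i ∈ I, ∀ j ∈ I, i ≠ j → ∀ v, v ∈ c i → v ∉ c j)
    (hmax : ∀ (J : Finset (Fin n)) (d : Fin n → Sym2 V),
      (∀ i ∈ J, d i ∈ F i) →
      (∀ i ∈ J, ∀ j ∈ J, i ≠ j → ∀ v, v ∈ d i → v ∉ d j) →
      J.card ≤ I.card) :
    ∃ S : Sym2 V → Finset (Sym2 V),
      ∀ e ∈ I.image c, 3 ≤ hwDeg F I (I.image c) e →
        S e ⊆ I.image c ∧
        (S e).card = hwDeg F I (I.image c) e ∧
        (∀ f ∈ S e, hwDeg F I (I.image c) f = 1) ∧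
        ∀ e' ∈ I.image c, 3 ≤ hwDeg F I (I.image c) e' → e ≠ e' →
          Disjoint (S e) (S e') := by
  classical
  set R : Finset (Sym2 V) := I.image c with hR
  have cmem : ∀ e ∈ R, ∃ j ∈ I, c j = e := by
    intro e he; exact Finset.mem_image.mp he
  have hRc : ∀ j ∈ I, c j ∈ R := fun j hj => Finset.mem_image_of_mem c hj
  have hRE : ∀ e ∈ R, e ∈ G.edgeSet := by
    intro e he; obtain ⟨j, hj, rfl⟩ := cmem e he; exact hedges j _ (hc j hj)
  have hRm : ∀ e ∈ R, ∀ f ∈ R, e ≠ f → ∀ v, v ∈ e → v ∉ f := by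
    intro e he f hf hef v hv
    obtain ⟨j, hj, rfl⟩ := cmem e he
    obtain ⟨k, hk, rfl⟩ := cmem f hf
    exact hdisj j hj k hk (fun h => hef (by rw [h])) v hv
  have symem : ∀ z : Sym2 V, ∃ v, v ∈ z := by
    intro z
    induction z using Sym2.ind with
    | _ x y => exact ⟨x, by simp⟩
  have cinj : ∀ k ∈ I, ∀ l ∈ I, c k = c l → k = l := by
    intro k hk l hl hkl
    by_contra hne
    obtain ⟨x, hx⟩ := symem (c k)
    exact hdisj k hk l hl hne x hx (hkl ▸ hx)
  have cne : ∀ k ∈ I, ∀ {j : Fin n}, j ∈ I → k ≠ j → c k ≠ c j := by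
    intro k hk j hj hkj h
    exact hkj (cinj k hk j hj h)
  -- L1 : pendants on a fixed edge of R from distinct unrepresented matchings
  -- sit at the same vertex.
  have L1 : ∀ f ∈ R, ∀ i1 i2 : Fin n, i1 ∉ I → i2 ∉ I → i1 ≠ i2 →
      ∀ x1 w1 x2 w2 : V, x1 ∈ f → x2 ∈ f →
      s(x1, w1) ∈ F i1 → s(x2, w2) ∈ F i2 →
      MeetsOnly R s(x1, w1) f → MeetsOnly R s(x2, w2) f →
      (∀ g ∈ R, w1 ∉ g) → (∀ g ∈ R, w2 ∉ g) → x1 = x2 := by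
    intro f hf i1 i2 hi1 hi2 h12 x1 w1 x2 w2 hx1 hx2 hp1 hp2 hm1 hm2 hw1 hw2
    by_contra hx
    obtain ⟨jf, hjf, hcjf⟩ := cmem f hf
    obtain ⟨y, hy⟩ := Sym2.mem_iff_exists.mp hx1
    have hfeq : f = s(x1, x2) := by
      rw [hy] at hx2 ⊢
      rcases Sym2.mem_iff.mp hx2 with h | h
      · exact absurd h.symm hx
      · rw [h]
    have hadj12 : G.Adj x1 x2 := by
      have h := hRE f hf; rw [hfeq, SimpleGraph.mem_edgeSet] at h; exact h
    have hadj1 : G.Adj x1 w1 := by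
      have h := hedges i1 _ hp1; rw [SimpleGraph.mem_edgeSet] at h; exact h
    have hadj2 : G.Adj x2 w2 := by
      have h := hedges i2 _ hp2; rw [SimpleGraph.mem_edgeSet] at h; exact h
    by_cases hw : w1 = w2
    · subst hw
      exact no_c3_s14 hfree hadj12 hadj2 hadj1.symm
    · -- augment: remove f, add the two pendants
      have havoid : ∀ (p : Sym2 V), MeetsOnly R p f → ∀ k ∈ I, k ≠ jf → ∀ v ∈ p, v ∉ c k := by
        intro p hmo k hk hkj v hv hvc
        exact hmo.2 (c k) (hRc k hk) (fun hh => cne k hk hjf hkj (hh.trans hcjf.symm)) ⟨v, hv, hvc⟩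
      refine aug2 F I c hc hdisj hmax hjf hi1 hi2 h12 hp1 hp2 ?_ ?_ ?_
      · intro v hv hv'
        rcases Sym2.mem_iff.mp hv with rfl | rfl <;> rcases Sym2.mem_iff.mp hv' with h | h
        · exact hx h
        · exact hw2 f hf (h ▸ hx1) |>.elim
        · exact hw1 f hf (h ▸ hx2) |>.elim
        · exact hw (h ▸ rfl)
      · exact fun k hk hkj => havoid _ hm1 k hk hkj
      · exact fun k hk hkj => havoid _ hm2 k hk hkj
  -- extract a pendant on the second edge of a half-wasteful pair
  have pend2 : ∀ e f : Sym2 V, e ∈ R → f ∈ R → e ≠ f → ∀ i : Fin n,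
      HalfWastefulPair R (F i) e f →
      ∃ x w', x ∈ f ∧ s(x, w') ∈ F i ∧ MeetsOnly R s(x, w') f ∧ ∀ g ∈ R, w' ∉ g := by
    intro e f he hf hef i hp
    obtain ⟨a, b, u, cc, dd, w, heq, hfeq, hau, hbc, hdw, hmau, hmdw, huU, hwU⟩ :=
      config14 hRE hRm (hedges i) (hmatch i) he hf hef hp
    exact ⟨dd, w, by rw [hfeq]; simp, hdw, hmdw, hwU⟩
  have pairsymm : ∀ (A : Finset (Sym2 V)) (e f : Sym2 V),
      HalfWastefulPair R A e f → HalfWastefulPair R A f e := by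
    rintro A e f ⟨ge, h1, gf, h2, gef, h3, m1, m2, m3, m4⟩
    exact ⟨gf, h2, ge, h1, gef, h3, m2, m1, m4, m3⟩
  -- pendant on an edge which is half-wasteful
  have pend : ∀ f ∈ R, ∀ i : Fin n, HalfWasteful R (F i) f →
      ∃ x w', x ∈ f ∧ s(x, w') ∈ F i ∧ MeetsOnly R s(x, w') f ∧ ∀ g ∈ R, w' ∉ g := by
    intro f hf i hw
    obtain ⟨h, hhR, hhf, hp⟩ := hw
    exact pend2 h f hhR hf hhf i (pairsymm _ _ _ hp)
  -- MASTER: if deg e ≥ 3 is witnessed by a pair {e,f} for F i and a third matching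
  -- F i'' also makes e half-wasteful, then no other matching F i' has a pendant on f.
  have master : ∀ e f : Sym2 V, e ∈ R → f ∈ R → e ≠ f →
      ∀ i i' i'' : Fin n, i ∉ I → i' ∉ I → i'' ∉ I → i ≠ i' → i ≠ i'' → i' ≠ i'' →
      HalfWastefulPair R (F i) e f → HalfWasteful R (F i'') e →
      ∀ x' w' : V, x' ∈ f → s(x', w') ∈ F i' → MeetsOnly R s(x', w') f →
      (∀ g ∈ R, w' ∉ g) → False := by
    intro e f he hf hef i i' i'' hi hi' hi'' hii' hii'' hi'i'' hp hw'' x' w' hx'f hx'w' hmx' hw'U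
    obtain ⟨a, b, u, cc, dd, w, heq, hfeq, hau, hbc, hdw, hmau, hmdw, huU, hwU⟩ :=
      config14 hRE hRm (hedges i) (hmatch i) he hf hef hp
    have hddf : dd ∈ f := by rw [hfeq]; simp
    have haf : a ∈ e := by rw [heq]; simp
    obtain rfl : dd = x' := L1 f hf i i' hi hi' hii' dd w x' w' hddf hx'f hdw hx'w' hmdw hmx' hwU hw'U
    obtain ⟨f'', hf''R, hf''ne, hp''⟩ := hw''
    obtain ⟨a2, b2, u'', cc2, dd2, w2, heq2, hfeq2, hau2, hbc2, hdw2, hmau2, hmdw2, huU2, hwU2⟩ :=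
      config14 hRE hRm (hedges i'') (hmatch i'') he hf''R (Ne.symm hf''ne) hp''
    have ha2e : a2 ∈ e := by rw [heq2]; simp
    obtain rfl : a = a2 := L1 e he i i'' hi hi'' hii'' a u a2 u'' haf ha2e hau hau2 hmau hmau2 huU huU2
    -- distinctness bookkeeping
    have hab : a ≠ b := by
      have h := hRE e he; rw [heq, SimpleGraph.mem_edgeSet] at h; exact h.ne
    have hcd : cc ≠ dd := by
      have h := hRE f hf; rw [hfeq, SimpleGraph.mem_edgeSet] at h; exact h.ne
    have hefd : ∀ v, v ∈ e → v ∉ f := hRm e he f hf hef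
    have hbe : b ∈ e := by rw [heq]; simp
    have hccf : cc ∈ f := by rw [hfeq]; simp
    have hac : a ≠ cc := fun h => hefd a haf (h ▸ hccf)
    have had : a ≠ dd := fun h => hefd a haf (h ▸ hddf)
    have hbc' : b ≠ cc := fun h => hefd b hbe (h ▸ hccf)
    have hbd : b ≠ dd := fun h => hefd b hbe (h ▸ hddf)
    have huc : ∀ {v : V}, (∀ g ∈ R, v ∉ g) → v ∉ e ∧ v ∉ f :=
      fun hv => ⟨hv e he, hv f hf⟩
    have hu''e : u'' ∉ e := (huc huU2).1
    have hu''f : u'' ∉ f := (huc huU2).2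
    have hu''a : u'' ≠ a := fun h => hu''e (h ▸ haf)
    have hu''b : u'' ≠ b := fun h => hu''e (h ▸ hbe)
    have hu''c : u'' ≠ cc := fun h => hu''f (h ▸ hccf)
    have hu''d : u'' ≠ dd := fun h => hu''f (h ▸ hddf)
    have hw'e : w' ∉ e := (huc hw'U).1
    have hw'f : w' ∉ f := (huc hw'U).2
    have hw'a : w' ≠ a := fun h => hw'e (h ▸ haf)
    have hw'b : w' ≠ b := fun h => hw'e (h ▸ hbe)
    have hw'c : w' ≠ cc := fun h => hw'f (h ▸ hccf)
    have hw'd : w' ≠ dd := fun h => hw'f (h ▸ hddf)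
    -- adjacencies
    have adj_au : G.Adj a u'' := by
      have h := hedges i'' _ hau2; rwa [SimpleGraph.mem_edgeSet] at h
    have adj_ab : G.Adj a b := by
      have h := hRE e he; rwa [heq, SimpleGraph.mem_edgeSet] at h
    have adj_bc : G.Adj b cc := by
      have h := hedges i _ hbc; rwa [SimpleGraph.mem_edgeSet] at h
    have adj_cd : G.Adj cc dd := by
      have h := hRE f hf; rwa [hfeq, SimpleGraph.mem_edgeSet] at h
    have adj_dw : G.Adj dd w' := by
      have h := hedges i' _ hx'w'; rwa [SimpleGraph.mem_edgeSet] at h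
    -- u'' ≠ w' by C5-freeness
    have huw : u'' ≠ w' := by
      intro h
      subst h
      exact no_c5_s14 hfree adj_au.symm adj_ab adj_bc adj_cd adj_dw
        hu''b hu''c hac had hbd
    -- now augment: remove e, f; add s(a,u'') [i''], s(b,cc) [i], s(dd,w') [i']
    obtain ⟨je, hje, hcje⟩ := cmem e he
    obtain ⟨jf, hjf, hcjf⟩ := cmem f hf
    have hjej : je ≠ jf := fun h => hef (by rw [← hcje, ← hcjf, h])
    have hckne : ∀ k ∈ I, k ≠ je → k ≠ jf → c k ≠ e ∧ c k ≠ f := by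
      intro k hk h1 h2
      exact ⟨hcje ▸ cne k hk hje h1, hcjf ▸ cne k hk hjf h2⟩
    refine aug3 F I c hc hdisj hmax hje hjf hjej hi'' hi hi'
      (Ne.symm hii'') (Ne.symm hi'i'') hii' hau2 hbc hx'w' ?_ ?_ ?_ ?_ ?_ ?_
    · intro v hv hv'
      rcases Sym2.mem_iff.mp hv with rfl | rfl <;> rcases Sym2.mem_iff.mp hv' with h | h
      · exact hab h
      · exact hac h
      · exact hu''b h
      · exact hu''c h
    · intro v hv hv'
      rcases Sym2.mem_iff.mp hv with rfl | rfl <;> rcases Sym2.mem_iff.mp hv' with h | h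
      · exact had h
      · exact hw'a h.symm
      · exact hu''d h
      · exact huw h
    · intro v hv hv'
      rcases Sym2.mem_iff.mp hv with rfl | rfl <;> rcases Sym2.mem_iff.mp hv' with h | h
      · exact hbd h
      · exact hw'b h.symm
      · exact hcd h
      · exact hw'c h.symm
    · intro k hk h1 h2 v hv hvc
      exact hmau2.2 (c k) (hRc k hk) (fun hh => (hckne k hk h1 h2).1 hh) ⟨v, hv, hvc⟩
    · intro k hk h1 h2 v hv hvc
      rcases Sym2.mem_iff.mp hv with rfl | rfl
      · exact hRm e he (c k) (hRc k hk) (Ne.symm (hckne k hk h1 h2).1) v hbe hvc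
      · exact hRm f hf (c k) (hRc k hk) (Ne.symm (hckne k hk h1 h2).2) v hccf hvc
    · intro k hk h1 h2 v hv hvc
      exact hmx'.2 (c k) (hRc k hk) (fun hh => (hckne k hk h1 h2).2 hh) ⟨v, hv, hvc⟩
  -- finite half-wasteful index sets
  set hws : Sym2 V → Finset (Fin n) :=
    fun e => Finset.univ.filter fun i => i ∉ I ∧ HalfWasteful R (F i) e with hws_def
  have hws_mem : ∀ (e : Sym2 V) (i : Fin n), i ∈ hws e ↔ i ∉ I ∧ HalfWasteful R (F i) e := by
    intro e i; simp [hws_def]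
  have hdeg : ∀ e, hwDeg F I R e = (hws e).card := by
    intro e
    have hset : {i : Fin n | i ∉ I ∧ HalfWasteful R (F i) e} = ↑(hws e) := by
      ext i; simp [hws_def]
    rw [hwDeg, hset, Set.ncard_coe_finset]
  have third : ∀ (e : Sym2 V), 3 ≤ (hws e).card → ∀ i1 i2 : Fin n,
      ∃ i3 ∈ hws e, i3 ≠ i1 ∧ i3 ≠ i2 := by
    intro e h3 i1 i2
    by_contra hcon
    push_neg at hcon
    have hsub : hws e ⊆ {i1, i2} := by
      intro x hx
      simp only [Finset.mem_insert, Finset.mem_singleton]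
      rcases eq_or_ne x i1 with h | h
      · exact Or.inl h
      · exact Or.inr (hcon x hx h)
    have hc1 := Finset.card_le_card hsub
    have hc2 := Finset.card_insert_le i1 ({i2} : Finset (Fin n))
    rw [Finset.card_singleton] at hc2
    omega
  have hch : ∀ (e : Sym2 V) (i : Fin n), HalfWasteful R (F i) e →
      ∃ f, f ∈ R ∧ f ≠ e ∧ HalfWastefulPair R (F i) e f := by
    rintro e i ⟨f, h1, h2, h3⟩; exact ⟨f, h1, h2, h3⟩
  set part : Sym2 V → Fin n → Sym2 V :=
    fun e i => if h : HalfWasteful R (F i) e then (hch e i h).choose else e with part_def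
  have hpart : ∀ (e : Sym2 V) (i : Fin n), HalfWasteful R (F i) e →
      part e i ∈ R ∧ part e i ≠ e ∧ HalfWastefulPair R (F i) e (part e i) := by
    intro e i h
    simp only [part_def, dif_pos h]
    exact (hch e i h).choose_spec
  have huniq : ∀ e ∈ R, 3 ≤ (hws e).card → ∀ i ∈ hws e, hws (part e i) = {i} := by
    intro e he h3 i hi
    obtain ⟨hiI, hiw⟩ := (hws_mem e i).mp hi
    obtain ⟨hfR, hfne, hp⟩ := hpart e i hiw
    ext i'
    rw [Finset.mem_singleton, hws_mem]
    constructor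
    · rintro ⟨hi'I, hw'⟩
      by_contra hne
      obtain ⟨x', w', hx'f, hxw, hmx, hwU⟩ := pend (part e i) hfR i' hw'
      obtain ⟨i3, hi3, h31, h32⟩ := third e h3 i i'
      obtain ⟨hi3I, hi3w⟩ := (hws_mem e i3).mp hi3
      exact master e (part e i) he hfR (Ne.symm hfne) i i' i3 hiI hi'I hi3I
        (fun h => hne h.symm) (Ne.symm h31) (Ne.symm h32) hp hi3w x' w' hx'f hxw hmx hwU
    · rintro rfl
      exact ⟨hiI, ⟨e, he, Ne.symm hfne, pairsymm _ _ _ hp⟩⟩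
  have hinj : ∀ e ∈ R, 3 ≤ (hws e).card → ∀ i1 ∈ hws e, ∀ i2 ∈ hws e,
      part e i1 = part e i2 → i1 = i2 := by
    intro e he h3 i1 hi1 i2 hi2 hpp
    have h1 := huniq e he h3 i1 hi1
    obtain ⟨hi2I, hi2w⟩ := (hws_mem e i2).mp hi2
    obtain ⟨hfR2, hfne2, hp2⟩ := hpart e i2 hi2w
    have hmem2 : i2 ∈ hws (part e i1) := by
      rw [hws_mem, hpp]
      exact ⟨hi2I, ⟨e, he, Ne.symm hfne2, pairsymm _ _ _ hp2⟩⟩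
    rw [h1, Finset.mem_singleton] at hmem2
    exact hmem2.symm
  refine ⟨fun e => (hws e).image (part e), ?_⟩
  intro e heR h3deg
  have h3 : 3 ≤ (hws e).card := by rwa [hdeg] at h3deg
  refine ⟨?_, ?_, ?_, ?_⟩
  · intro f hf
    obtain ⟨i, hi, rfl⟩ := Finset.mem_image.mp hf
    exact (hpart e i ((hws_mem e i).mp hi).2).1
  · rw [hdeg]
    exact Finset.card_image_of_injOn fun i1 hi1 i2 hi2 hpp =>
      hinj e heR h3 i1 hi1 i2 hi2 hpp
  · intro f hfm
    obtain ⟨i, hi, rfl⟩ := Finset.mem_image.mp hfm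
    rw [hdeg, huniq e heR h3 i hi, Finset.card_singleton]
  · intro e' he'R h3deg' hee'
    have h3' : 3 ≤ (hws e').card := by rwa [hdeg] at h3deg'
    rw [Finset.disjoint_left]
    intro f hfSe hfSe'
    obtain ⟨i1, hi1, hfe1⟩ := Finset.mem_image.mp hfSe
    obtain ⟨i2, hi2, hfe2⟩ := Finset.mem_image.mp hfSe'
    subst hfe1
    obtain ⟨hi1I, hi1w⟩ := (hws_mem e i1).mp hi1
    obtain ⟨hfR1, hfne1, hp1⟩ := hpart e i1 hi1w
    obtain ⟨hi2I, hi2w⟩ := (hws_mem e' i2).mp hi2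
    obtain ⟨hfR2, hfne2, hp2⟩ := hpart e' i2 hi2w
    have h1 := huniq e heR h3 i1 hi1
    have hmem2 : i2 ∈ hws (part e i1) := by
      rw [hws_mem, ← hfe2]
      exact ⟨hi2I, ⟨e', he'R, Ne.symm hfne2, pairsymm _ _ _ hp2⟩⟩
    rw [h1, Finset.mem_singleton] at hmem2
    subst hmem2
    -- same matching, two partners e and e' for the same f : contradiction
    rw [hfe2] at hp2 hfne2 hfR2
    obtain ⟨a, b, u, cc, dd, w, heq, hfeq, hau, hbc, hdw, hmau, hmdw, huU, hwU⟩ :=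
      config14 hRE hRm (hedges i2) (hmatch i2) heR hfR1 (Ne.symm hfne1) hp1
    obtain ⟨a2, b2, u2, cc2, dd2, w2, heq2, hfeq2, hau2, hbc2, hdw2, hmau2, hmdw2, huU2, hwU2⟩ :=
      config14 hRE hRm (hedges i2) (hmatch i2) he'R hfR1 (Ne.symm hfne2) hp2
    have hbe : b ∈ e := by rw [heq]; simp
    have hb2e' : b2 ∈ e' := by rw [heq2]; simp
    have hddf : dd ∈ part e i2 := by rw [hfeq]; simp
    have hccf : cc ∈ part e i2 := by rw [hfeq]; simp
    have hcc2f : cc2 ∈ part e i2 := by rw [hfeq2]; simp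
    by_cases hgg : s(b, cc) = s(b2, cc2)
    · rcases Sym2.eq_iff.mp hgg with ⟨h1', h2'⟩ | ⟨h1', h2'⟩
      · exact hRm e heR e' he'R hee' b hbe (h1' ▸ hb2e')
      · exact hRm e heR (part e i2) hfR1 (Ne.symm hfne1) b hbe (h1' ▸ hcc2f)
    · have hd := hmatch i2 _ hbc _ hbc2 hgg
      have hcne : cc ≠ cc2 := by
        intro h
        exact hd cc (by simp) (by rw [h]; simp)
      have hcc2d : cc2 = dd := by
        rw [hfeq] at hcc2f
        rcases Sym2.mem_iff.mp hcc2f with h | h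
        · exact absurd h.symm hcne
        · exact h
      by_cases hgg2 : s(dd, w) = s(b2, cc2)
      · rcases Sym2.eq_iff.mp hgg2 with ⟨h1', h2'⟩ | ⟨h1', h2'⟩
        · exact hRm (part e i2) hfR1 e' he'R hfne2 dd hddf (h1' ▸ hb2e')
        · exact hwU e' he'R (h2' ▸ hb2e')
      · exact hmatch i2 _ hdw _ hbc2 hgg2 dd (by simp) (by rw [hcc2d]; simp)
end

section
/- Let F_1, …, F_n be pairwise disjoint matchings of size n in a graph, and let R be a rainbow matching of maximum size. Suppose e ∈ R is half-G-wasteful for at least 3 distinct unrepresented matchings G. Then all edges g that belong to some unrepresented matching G for which e is half-G-wasteful and that intersect e and no other edge of R pass through a single common vertex of e. -/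
lemma sym2_disj {V : Type*} {u c u' c' : V} (h1 : u ≠ u') (h2 : u ≠ c') (h3 : c ≠ u')
    (h4 : c ≠ c') : ∀ v, v ∈ s(u, c) → v ∉ s(u', c') := by
  intro v hv hv'
  rw [Sym2.mem_iff] at hv hv'
  rcases hv with rfl | rfl <;> rcases hv' with rfl | rfl <;> simp_all

lemma edge_form {V : Type*} {g : Sym2 V} {x y : V} (hg : ¬ g.IsDiag)
    (hne : g ≠ s(x, y)) (hm : Meets g s(x, y)) :
    ∃ c, c ≠ x ∧ c ≠ y ∧ (g = s(x, c) ∨ g = s(y, c)) := by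
  obtain ⟨u, w⟩ := g
  rw [Sym2.mk_isDiag_iff] at hg
  obtain ⟨v, hvg, hve⟩ := hm
  rw [Sym2.mem_iff] at hvg hve
  rcases hvg with rfl | rfl
  · rcases hve with rfl | rfl
    · refine ⟨w, fun h => hg h.symm, fun h => hne (by rw [h]), Or.inl rfl⟩
    · refine ⟨w, fun h => hne (by rw [h, Sym2.eq_swap]), fun h => hg h.symm, Or.inr rfl⟩
  · rcases hve with rfl | rfl
    · refine ⟨u, hg, fun h => hne (by rw [h, Sym2.eq_swap]), Or.inl (Sym2.eq_swap)⟩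
    · refine ⟨u, fun h => hne (by rw [h]), hg, Or.inr (Sym2.eq_swap)⟩

lemma aug_contra {V : Type*} [DecidableEq V] {n : ℕ} {F : Fin n → Finset (Sym2 V)}
    {I : Finset (Fin n)} {c : Fin n → Sym2 V}
    (hc : ∀ i ∈ I, c i ∈ F i)
    (hdisj : ∀ i ∈ I, ∀ j ∈ I, i ≠ j → ∀ v, v ∈ c i → v ∉ c j)
    (hmax : ∀ (J : Finset (Fin n)) (d : Fin n → Sym2 V),
      (∀ i ∈ J, d i ∈ F i) →
      (∀ i ∈ J, ∀ j ∈ J, i ≠ j → ∀ v, v ∈ d i → v ∉ d j) →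
      J.card ≤ I.card)
    {e : Sym2 V} {i0 : Fin n} (hi0 : i0 ∈ I) (hci0 : c i0 = e)
    {k1 k2 : Fin n} {p q : Sym2 V} (hk : k1 ≠ k2) (hk1 : k1 ∉ I) (hk2 : k2 ∉ I)
    (hp : p ∈ F k1) (hq : q ∈ F k2)
    (hpM : MeetsOnly (I.image c) p e) (hqM : MeetsOnly (I.image c) q e)
    (hpq : ∀ v, v ∈ p → v ∉ q) : False := by
  classical
  have hciNe : ∀ i ∈ I, i ≠ i0 → c i ≠ e := by
    intro i hi hne h
    exact hdisj i hi i0 hi0 hne (c i).out.1 (Sym2.out_fst_mem _)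
      (by rw [hci0, ← h]; exact Sym2.out_fst_mem _)
  have hpno : ∀ i ∈ I, i ≠ i0 → ∀ v, v ∈ p → v ∉ c i := by
    intro i hi hne v hv hvc
    exact hpM.2 (c i) (Finset.mem_image_of_mem c hi) (hciNe i hi hne) ⟨v, hv, hvc⟩
  have hqno : ∀ i ∈ I, i ≠ i0 → ∀ v, v ∈ q → v ∉ c i := by
    intro i hi hne v hv hvc
    exact hqM.2 (c i) (Finset.mem_image_of_mem c hi) (hciNe i hi hne) ⟨v, hv, hvc⟩
  set d : Fin n → Sym2 V := fun i => if i = k1 then p else if i = k2 then q else c i with hd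
  have hd1 : d k1 = p := by simp [hd]
  have hd2 : d k2 = q := by simp [hd, hk.symm]
  have hd3 : ∀ i ∈ I, d i = c i := by
    intro i hi
    have h1 : i ≠ k1 := fun h => hk1 (h ▸ hi)
    have h2 : i ≠ k2 := fun h => hk2 (h ▸ hi)
    simp [hd, h1, h2]
  set J : Finset (Fin n) := insert k1 (insert k2 (I.erase i0)) with hJ
  have hk2e : k2 ∉ I.erase i0 := fun h => hk2 (Finset.mem_of_mem_erase h)
  have hk1e : k1 ∉ insert k2 (I.erase i0) := by
    simp only [Finset.mem_insert, Finset.mem_erase]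
    rintro (h | ⟨-, h⟩)
    · exact hk h
    · exact hk1 h
  have hmemJ : ∀ i, i ∈ J → i = k1 ∨ i = k2 ∨ (i ∈ I ∧ i ≠ i0) := by
    intro i hi
    simp only [hJ, Finset.mem_insert, Finset.mem_erase] at hi
    tauto
  have h1 : ∀ i ∈ J, d i ∈ F i := by
    intro i hi
    rcases hmemJ i hi with rfl | rfl | ⟨hiI, -⟩
    · rw [hd1]; exact hp
    · rw [hd2]; exact hq
    · rw [hd3 i hiI]; exact hc i hiI
  have h2 : ∀ i ∈ J, ∀ j ∈ J, i ≠ j → ∀ v, v ∈ d i → v ∉ d j := by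
    intro i hi j hj hij v hvi hvj
    rcases hmemJ i hi with rfl | rfl | ⟨hiI, hine⟩ <;>
      rcases hmemJ j hj with rfl | rfl | ⟨hjI, hjne⟩
    · exact hij rfl
    · rw [hd1] at hvi; rw [hd2] at hvj; exact hpq v hvi hvj
    · rw [hd1] at hvi; rw [hd3 j hjI] at hvj; exact hpno j hjI hjne v hvi hvj
    · rw [hd1] at hvj; rw [hd2] at hvi; exact hpq v hvj hvi
    · exact hij rfl
    · rw [hd2] at hvi; rw [hd3 j hjI] at hvj; exact hqno j hjI hjne v hvi hvj
    · rw [hd3 i hiI] at hvi; rw [hd1] at hvj; exact hpno i hiI hine v hvj hvi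
    · rw [hd3 i hiI] at hvi; rw [hd2] at hvj; exact hqno i hiI hine v hvj hvi
    · rw [hd3 i hiI] at hvi; rw [hd3 j hjI] at hvj; exact hdisj i hiI j hjI hij v hvi hvj
  have hcard := hmax J d h1 h2
  have hJc : J.card = (I.erase i0).card + 2 := by
    rw [hJ, Finset.card_insert_of_notMem hk1e, Finset.card_insert_of_notMem hk2e]
  have hec : (I.erase i0).card = I.card - 1 := Finset.card_erase_of_mem hi0
  have hpos : 1 ≤ I.card := Finset.card_pos.mpr ⟨i0, hi0⟩
  omega

/-- Let `F₁, …, Fₙ` be pairwise disjoint matchings of size `n` in a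
graph, and `R = I.image c` a maximum-size rainbow matching. If `e ∈ R` is
half-`G`-wasteful for at least 3 distinct unrepresented matchings `G`, then all edges `g`
belonging to some unrepresented matching `G` for which `e` is half-`G`-wasteful and
intersecting `e` and no other edge of `R` pass through a single common vertex of `e`. -/
theorem stmt_15 {V : Type*} [DecidableEq V] (G : SimpleGraph V) (n : ℕ)
    (F : Fin n → Finset (Sym2 V))
    (hedges : ∀ i, ∀ e ∈ F i, e ∈ G.edgeSet)
    (hmatch : ∀ i, ∀ e ∈ F i, ∀ f ∈ F i, e ≠ f → ∀ v, v ∈ e → v ∉ f)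
    (hsize : ∀ i, (F i).card = n)
    (hdisjF : ∀ i j, i ≠ j → Disjoint (F i) (F j))
    (I : Finset (Fin n)) (c : Fin n → Sym2 V)
    (hc : ∀ i ∈ I, c i ∈ F i)
    (hdisj : ∀ i ∈ I, ∀ j ∈ I, i ≠ j → ∀ v, v ∈ c i → v ∉ c j)
    (hmax : ∀ (J : Finset (Fin n)) (d : Fin n → Sym2 V),
      (∀ i ∈ J, d i ∈ F i) →
      (∀ i ∈ J, ∀ j ∈ J, i ≠ j → ∀ v, v ∈ d i → v ∉ d j) →
      J.card ≤ I.card)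
    (e : Sym2 V) (he : e ∈ I.image c)
    (hdeg : 3 ≤ hwDeg F I (I.image c) e) :
    ∃ v, v ∈ e ∧ ∀ i : Fin n, i ∉ I → HalfWasteful (I.image c) (F i) e →
      ∀ g ∈ F i, MeetsOnly (I.image c) g e → v ∈ g := by
  classical
  obtain ⟨i0, hi0, hci0⟩ := Finset.mem_image.mp he
  have heF : e ∈ F i0 := hci0 ▸ hc i0 hi0
  obtain ⟨x, y, rfl⟩ : ∃ x y, e = s(x, y) := Sym2.ind (fun x y => ⟨x, y, rfl⟩) e
  have hxy : x ≠ y := by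
    have := G.not_isDiag_of_mem_edgeSet (hedges i0 _ heF)
    rwa [Sym2.mk_isDiag_iff] at this
  -- an edge of an unrepresented matching is never equal to e
  have hne_e : ∀ j, j ∉ I → ∀ g ∈ F j, g ≠ s(x, y) := by
    intro j hjI g hg hge
    have hji0 : j ≠ i0 := fun h => hjI (h ▸ hi0)
    exact Finset.disjoint_left.mp (hdisjF j i0 hji0) hg (hge ▸ heF)
  -- extract a normalized "private" edge from a half-wasteful unrepresented matching
  have getg : ∀ j, j ∉ I → HalfWasteful (I.image c) (F j) s(x, y) →
      ∃ cc, cc ≠ x ∧ cc ≠ y ∧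
        ((s(x, cc) ∈ F j ∧ MeetsOnly (I.image c) s(x, cc) s(x, y)) ∨
         (s(y, cc) ∈ F j ∧ MeetsOnly (I.image c) s(y, cc) s(x, y))) := by
    intro j hjI hHW
    obtain ⟨f, hf, hfe, ge, hgeF, gf, hgfF, gef, hgefF, hgeMO, -, -, -⟩ := hHW
    have hdiag : ¬ ge.IsDiag := G.not_isDiag_of_mem_edgeSet (hedges j _ hgeF)
    obtain ⟨cc, hcx, hcy, hcase⟩ := edge_form hdiag (hne_e j hjI ge hgeF) hgeMO.1
    rcases hcase with h | h
    · exact ⟨cc, hcx, hcy, Or.inl ⟨h ▸ hgeF, h ▸ hgeMO⟩⟩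
    · exact ⟨cc, hcx, hcy, Or.inr ⟨h ▸ hgeF, h ▸ hgeMO⟩⟩
  by_contra hcon
  push_neg at hcon
  obtain ⟨i1, hi1I, hHW1, g1, hg1F, hg1MO, hxg1⟩ :=
    hcon x (Sym2.mem_mk_left x y)
  obtain ⟨i2, hi2I, hHW2, g2, hg2F, hg2MO, hyg2⟩ :=
    hcon y (Sym2.mem_mk_right x y)
  -- g1 = s(y, a) with a ∉ {x, y}
  obtain ⟨a, hax, hay, hg1⟩ :
      ∃ a, a ≠ x ∧ a ≠ y ∧ g1 = s(y, a) := by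
    have hdiag : ¬ g1.IsDiag := G.not_isDiag_of_mem_edgeSet (hedges i1 _ hg1F)
    obtain ⟨a, hax0, hay0, h⟩ := edge_form hdiag (hne_e i1 hi1I g1 hg1F) hg1MO.1
    rcases h with h | h
    · exact absurd (h ▸ Sym2.mem_mk_left x a) hxg1
    · exact ⟨a, hax0, hay0, h⟩
  obtain ⟨b, hbx, hby, hg2⟩ :
      ∃ b, b ≠ x ∧ b ≠ y ∧ g2 = s(x, b) := by
    have hdiag : ¬ g2.IsDiag := G.not_isDiag_of_mem_edgeSet (hedges i2 _ hg2F)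
    obtain ⟨b, hbx0, hby0, h⟩ := edge_form hdiag (hne_e i2 hi2I g2 hg2F) hg2MO.1
    rcases h with h | h
    · exact ⟨b, hbx0, hby0, h⟩
    · exact absurd (h ▸ Sym2.mem_mk_left y b) hyg2
  rw [hg1] at hg1F hg1MO
  rw [hg2] at hg2F hg2MO
  -- three distinct half-wasteful unrepresented indices
  have hSfin : ({i : Fin n | i ∉ I ∧ HalfWasteful (I.image c) (F i) s(x, y)}).Finite :=
    Set.toFinite _
  have hcard3 : 2 < hSfin.toFinset.card := by
    rw [← Set.ncard_eq_toFinset_card _ hSfin]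
    exact hdeg
  obtain ⟨j1, hj1, j2, hj2, j3, hj3, hj12, hj13, hj23⟩ := Finset.two_lt_card.mp hcard3
  rw [Set.Finite.mem_toFinset, Set.mem_setOf_eq] at hj1 hj2 hj3
  by_cases h12 : i1 = i2
  · -- g1, g2 in the same matching F i1
    subst h12
    have hab : a ≠ b := by
      intro h
      have hne12 : s(y, a) ≠ s(x, b) := by
        intro hh
        rw [Sym2.eq_iff] at hh
        tauto
      exact hmatch i1 _ hg1F _ hg2F hne12 a (Sym2.mem_mk_right y a)
        (by rw [h]; exact Sym2.mem_mk_right x b)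
    -- two indices avoiding i1
    obtain ⟨k, k', hkk', hkI, hkHW, hk'I, hk'HW, hki, hk'i⟩ :
        ∃ k k', k ≠ k' ∧ k ∉ I ∧ HalfWasteful (I.image c) (F k) s(x, y) ∧
          k' ∉ I ∧ HalfWasteful (I.image c) (F k') s(x, y) ∧ k ≠ i1 ∧ k' ≠ i1 := by
      by_cases h1 : j1 = i1
      · exact ⟨j2, j3, hj23, hj2.1, hj2.2, hj3.1, hj3.2,
          fun h => hj12 (h1 ▸ h ▸ rfl), fun h => hj13 (h1 ▸ h ▸ rfl)⟩
      · by_cases h2 : j2 = i1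
        · exact ⟨j1, j3, hj13, hj1.1, hj1.2, hj3.1, hj3.2, h1,
            fun h => hj23 (h2 ▸ h ▸ rfl)⟩
        · exact ⟨j1, j2, hj12, hj1.1, hj1.2, hj2.1, hj2.2, h1, h2⟩
    have step : ∀ m, m ∉ I → m ≠ i1 → HalfWasteful (I.image c) (F m) s(x, y) →
        (s(x, a) ∈ F m ∧ MeetsOnly (I.image c) s(x, a) s(x, y)) ∨
        (s(y, b) ∈ F m ∧ MeetsOnly (I.image c) s(y, b) s(x, y)) := by
      intro m hmI hmi hmHW
      obtain ⟨cc, hccx, hccy, hcase⟩ := getg m hmI hmHW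
      rcases hcase with ⟨hmem, hMO⟩ | ⟨hmem, hMO⟩
      · by_cases hca : cc = a
        · exact Or.inl ⟨hca ▸ hmem, hca ▸ hMO⟩
        · exact absurd (aug_contra hc hdisj hmax hi0 hci0 hmi hmI hi1I hmem hg1F hMO
            hg1MO (sym2_disj hxy hax.symm hccy hca)) not_false
      · by_cases hcb : cc = b
        · exact Or.inr ⟨hcb ▸ hmem, hcb ▸ hMO⟩
        · exact absurd (aug_contra hc hdisj hmax hi0 hci0 hmi hmI hi1I hmem hg2F hMO
            hg2MO (sym2_disj hxy.symm hby.symm hccx hcb)) not_false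
    rcases step k hkI hki hkHW with ⟨hm1, hMO1⟩ | ⟨hm1, hMO1⟩ <;>
      rcases step k' hk'I hk'i hk'HW with ⟨hm2, hMO2⟩ | ⟨hm2, hMO2⟩
    · exact Finset.disjoint_left.mp (hdisjF k k' hkk') hm1 hm2
    · exact aug_contra hc hdisj hmax hi0 hci0 hkk' hkI hk'I hm1 hm2 hMO1 hMO2
        (sym2_disj hxy hbx.symm hay hab)
    · exact aug_contra hc hdisj hmax hi0 hci0 hkk'.symm hk'I hkI hm2 hm1 hMO2 hMO1
        (sym2_disj hxy hbx.symm hay hab)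
    · exact Finset.disjoint_left.mp (hdisjF k k' hkk') hm1 hm2
  · -- i1 ≠ i2
    by_cases hab : a = b
    · subst hab
      -- find k avoiding both i1 and i2
      obtain ⟨k, hkI, hkHW, hk1, hk2⟩ :
          ∃ k, k ∉ I ∧ HalfWasteful (I.image c) (F k) s(x, y) ∧ k ≠ i1 ∧ k ≠ i2 := by
        by_cases e1 : j1 = i1 ∨ j1 = i2
        · by_cases e2 : j2 = i1 ∨ j2 = i2
          · rcases e1 with rfl | rfl <;> rcases e2 with rfl | rfl
            · exact absurd rfl hj12
            · exact ⟨j3, hj3.1, hj3.2, hj13.symm, hj23.symm⟩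
            · exact ⟨j3, hj3.1, hj3.2, hj23.symm, hj13.symm⟩
            · exact absurd rfl hj12
          · push_neg at e2
            exact ⟨j2, hj2.1, hj2.2, e2.1, e2.2⟩
        · push_neg at e1
          exact ⟨j1, hj1.1, hj1.2, e1.1, e1.2⟩
      obtain ⟨cc, hccx, hccy, hcase⟩ := getg k hkI hkHW
      rcases hcase with ⟨hmem, hMO⟩ | ⟨hmem, hMO⟩
      · by_cases hca : cc = a
        · exact Finset.disjoint_left.mp (hdisjF k i2 hk2) (hca ▸ hmem) hg2F
        · exact aug_contra hc hdisj hmax hi0 hci0 hk1 hkI hi1I hmem hg1F hMO hg1MO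
            (sym2_disj hxy hax.symm hccy hca)
      · by_cases hca : cc = a
        · exact Finset.disjoint_left.mp (hdisjF k i1 hk1) (hca ▸ hmem) hg1F
        · exact aug_contra hc hdisj hmax hi0 hci0 hk2 hkI hi2I hmem hg2F hMO hg2MO
            (sym2_disj hxy.symm hay.symm hccx hca)
    · exact aug_contra hc hdisj hmax hi0 hci0 h12 hi1I hi2I hg1F hg2F hg1MO hg2MO
        (sym2_disj hxy.symm hby.symm hax hab)
end
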